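/- arXiv:1008.5092 — 6 statements merged into one kernel-verified Lean document; each statement's English description precedes it below -/
import Mathlib

section
/- Let k be an even integer with k ≥ 12, let f ∈ S_k(SL(2,ℤ)), let z₀ ∈ ℍ and m ∈ ℤ_{≥0}. Then c_{z₀}(f,m) = Σ_{r=0}^{m} C(m+k−1, r+k−1) · (z₀ − conj(z₀))^{r+k/2} · f^{(r)}(z₀)/r!, where f^{(r)} denotes the r-th complex derivative of f and C(·,·) is the binomial coefficient. -/
noncomputable section

open Complex Real MeasureTheory

/-- The weight-`k` slash of `f` by `σ_{z₀}`, as a function on the unit disc. -/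
def slashDisc (k : ℕ) (z₀ : ℂ) (f : ℂ → ℂ) (w : ℂ) : ℂ :=
  (2 * Complex.I * (z₀.im : ℂ)) ^ (k / 2) * (1 - w) ^ (-(k : ℤ)) *
    f ((z₀ - (starRingEnd ℂ) z₀ * w) / (1 - w))

/-- The `n`-th Fourier (normalized Taylor) coefficient of `f` at `z₀`, in weight `k`. -/
def fourierCoeffAt (k : ℕ) (z₀ : ℂ) (f : ℂ → ℂ) (n : ℕ) : ℂ :=
  iteratedDeriv n (slashDisc k z₀ f) 0 / (n.factorial : ℂ)

/-- Holomorphic cusp form of weight `k` for `SL(2,ℤ)`. -/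
def IsCuspForm (k : ℕ) (f : ℂ → ℂ) : Prop :=
  (∀ z : ℂ, 0 < z.im → DifferentiableAt ℂ f z) ∧
  (∀ γ : Matrix.SpecialLinearGroup (Fin 2) ℤ, ∀ z : ℂ, 0 < z.im →
      f ((((γ : Matrix (Fin 2) (Fin 2) ℤ) 0 0 : ℂ) * z + ((γ : Matrix (Fin 2) (Fin 2) ℤ) 0 1 : ℂ)) /
          (((γ : Matrix (Fin 2) (Fin 2) ℤ) 1 0 : ℂ) * z + ((γ : Matrix (Fin 2) (Fin 2) ℤ) 1 1 : ℂ)))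
        = (((γ : Matrix (Fin 2) (Fin 2) ℤ) 1 0 : ℂ) * z +
            ((γ : Matrix (Fin 2) (Fin 2) ℤ) 1 1 : ℂ)) ^ k * f z) ∧
  (∀ ε : ℝ, 0 < ε → ∃ Y : ℝ, ∀ x y : ℝ, Y < y → ‖f (x + y * Complex.I)‖ < ε)

/-- Ramanujan's Delta function. -/
def Delta (z : ℂ) : ℂ :=
  Complex.exp (2 * π * Complex.I * z) *
    ∏' n : ℕ, (1 - Complex.exp (2 * π * Complex.I * (n + 1) * z)) ^ 24

def E2star (z : ℂ) : ℂ :=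
  1 - 24 * ∑' n : ℕ, (ArithmeticFunction.sigma 1 (n + 1) : ℂ) *
      Complex.exp (2 * π * Complex.I * (n + 1) * z) - 3 / (π * z.im)

def E4 (z : ℂ) : ℂ :=
  1 + 240 * ∑' n : ℕ, (ArithmeticFunction.sigma 3 (n + 1) : ℂ) *
      Complex.exp (2 * π * Complex.I * (n + 1) * z)

def E6 (z : ℂ) : ℂ :=
  1 - 504 * ∑' n : ℕ, (ArithmeticFunction.sigma 5 (n + 1) : ℂ) *
      Complex.exp (2 * π * Complex.I * (n + 1) * z)

/-- The polynomials 𝓑ₙ ∈ ℤ[Q,R]; `X 0` is `Q = E₄`, `X 1` is `R = E₆`. -/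
def Bpoly : ℕ → MvPolynomial (Fin 2) ℤ
  | 0 => 1
  | 1 => 0
  | (n + 2) =>
      -4 * MvPolynomial.X 1 * MvPolynomial.pderiv 0 (Bpoly (n + 1))
        - 6 * MvPolynomial.X 0 ^ 2 * MvPolynomial.pderiv 1 (Bpoly (n + 1))
        - MvPolynomial.C (((n : ℤ) + 1) * ((n : ℤ) + 12)) * MvPolynomial.X 0 * Bpoly n

/-- The polynomials pₙ(t). -/
def ppoly : ℕ → Polynomial ℤ
  | 0 => 1
  | 1 => 0
  | (n + 2) =>
      Polynomial.C (-2 * ((n : ℤ) + 1)) * Polynomial.X * ppoly (n + 1)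
        + 6 * (Polynomial.X ^ 2 - 1) * Polynomial.derivative (ppoly (n + 1))
        - Polynomial.C (((n : ℤ) + 1) * ((n : ℤ) + 12)) * ppoly n

/-- The polynomials qₙ(t). -/
def qpoly : ℕ → Polynomial ℤ
  | 0 => 1
  | 1 => 0
  | (n + 2) =>
      Polynomial.C (-2 * ((n : ℤ) + 1)) * Polynomial.X ^ 2 * qpoly (n + 1)
        + 4 * (Polynomial.X ^ 3 - 1) * Polynomial.derivative (qpoly (n + 1))
        - Polynomial.C (((n : ℤ) + 1) * ((n : ℤ) + 12)) * Polynomial.X * qpoly n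

/-- The general recursion q₀ = 1, q₁ = a₁,
`q_{n+1} = (a₁ + n a₂) q_n + a₃ q_n' + n(n+11) a₄ q_{n-1}`. -/
def qrec {R : Type*} [CommRing R] (a₁ a₂ a₃ a₄ : Polynomial R) : ℕ → Polynomial R
  | 0 => 1
  | 1 => a₁
  | (n + 2) =>
      (a₁ + ((n : Polynomial R) + 1) * a₂) * qrec a₁ a₂ a₃ a₄ (n + 1)
        + a₃ * Polynomial.derivative (qrec a₁ a₂ a₃ a₄ (n + 1))
        + ((n : Polynomial R) + 1) * ((n : Polynomial R) + 12) * a₄ * qrec a₁ a₂ a₃ a₄ n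

/-- Maass raising operator of weight `w`. -/
def raise (w : ℤ) (g : ℂ → ℂ) : ℂ → ℂ := fun z =>
  1 / (2 * π * Complex.I) * deriv g z - (w : ℂ) / (4 * π * z.im) * g z

/-- `raiseIter k m = ∂_{k+2m-2} ∘ ⋯ ∘ ∂_{k+2} ∘ ∂_k`. -/
def raiseIter (k : ℕ) : ℕ → (ℂ → ℂ) → (ℂ → ℂ)
  | 0 => fun g => g
  | (m + 1) => fun g => raise ((k : ℤ) + 2 * m) (raiseIter k m g)

/-- Möbius action of `SL(2,ℤ)` on `ℂ`. -/
def moebius (γ : Matrix.SpecialLinearGroup (Fin 2) ℤ) (z : ℂ) : ℂ :=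
  (((γ : Matrix (Fin 2) (Fin 2) ℤ) 0 0 : ℂ) * z + ((γ : Matrix (Fin 2) (Fin 2) ℤ) 0 1 : ℂ)) /
    (((γ : Matrix (Fin 2) (Fin 2) ℤ) 1 0 : ℂ) * z + ((γ : Matrix (Fin 2) (Fin 2) ℤ) 1 1 : ℂ))

/-- Order of the stabilizer of `z₀` in `PSL(2,ℤ)`. -/
def stabOrder (z₀ : ℂ) : ℕ :=
  Set.ncard {γ : Matrix.SpecialLinearGroup (Fin 2) ℤ | moebius γ z₀ = z₀} / 2

/-- The CM point attached to a fundamental discriminant `D < 0`.  -/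
def cmPoint (D : ℤ) : ℂ :=
  if D % 2 = 0 then Complex.I * (Real.sqrt (|D| : ℝ) : ℂ) / 2
  else (1 + Complex.I * (Real.sqrt (|D| : ℝ) : ℂ)) / 2

/-- A term of the weight-12 elliptic Poincaré series attached to `z₀`. -/
def poincareTerm (z₀ : ℂ) (m : ℕ) (γ : Matrix.SpecialLinearGroup (Fin 2) ℤ) (z : ℂ) : ℂ :=
  (2 * Complex.I * (z₀.im : ℂ)) ^ 6 * (moebius γ z - z₀) ^ m /
    ((moebius γ z - (starRingEnd ℂ) z₀) ^ (m + 12) *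
      (((γ : Matrix (Fin 2) (Fin 2) ℤ) 1 0 : ℂ) * z + ((γ : Matrix (Fin 2) (Fin 2) ℤ) 1 1 : ℂ)) ^ 12)

/-- `𝓔_m(z)`. -/
def Ecal (m : ℕ) (z : ℂ) : ℂ :=
  ∑ r ∈ Finset.range (m + 1),
    ((m.factorial / r.factorial : ℕ) : ℂ) * (Nat.choose (m + 11) (r + 11) : ℂ) *
      E2star z ^ (m - r) * MvPolynomial.aeval ![E4 z, E6 z] (Bpoly r)

/-- the Fourier coefficient at `z₀` in terms of derivatives of `f`. -/
theorem fourierCoeffAt_eq_sum_deriv (k : ℕ) (hk : Even k) (hk12 : 12 ≤ k)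
    (f : ℂ → ℂ) (hf : IsCuspForm k f) (z₀ : ℂ) (hz₀ : 0 < z₀.im) (m : ℕ) :
    fourierCoeffAt k z₀ f m =
      ∑ r ∈ Finset.range (m + 1),
        (Nat.choose (m + k - 1) (r + k - 1) : ℂ) *
          (z₀ - (starRingEnd ℂ) z₀) ^ (r + k / 2) * iteratedDeriv r f z₀ / (r.factorial : ℂ) := by
  classical
  obtain ⟨hdiff, -, -⟩ := hf
  set R : ℝ := z₀.im with hR
  have hR0 : 0 < R := hz₀
  set c : ℂ := 2 * Complex.I * (z₀.im : ℂ) with hcdef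
  have hc : z₀ - (starRingEnd ℂ) z₀ = c := by
    rw [Complex.sub_conj]; push_cast; ring
  set a : ℕ → ℂ := fun r => (r.factorial : ℂ)⁻¹ * iteratedDeriv r f z₀ with ha
  set b : ℕ → ℂ := fun n => c ^ (k / 2) *
      ∑ r ∈ Finset.range (n + 1),
        ((n + k - 1).choose (r + k - 1) : ℂ) * a r * c ^ r with hb
  -- differentiability on a ball
  have hfd : DifferentiableOn ℂ f (Metric.ball z₀ R) := by
    intro z hz
    refine (hdiff z ?_).differentiableWithinAt
    rw [Metric.mem_ball, Complex.dist_eq] at hz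
    have h1 : |(z - z₀).im| ≤ ‖z - z₀‖ := Complex.abs_im_le_norm _
    rw [Complex.sub_im] at h1
    have := abs_lt.mp (lt_of_le_of_lt h1 hz)
    simp only [hR] at this ⊢
    linarith [this.1]
  -- Taylor series of f at z₀
  have hTaylor : ∀ u : ℂ, ‖u‖ < R → HasSum (fun r => a r * u ^ r) (f (z₀ + u)) := by
    intro u hu
    have hz : z₀ + u ∈ Metric.ball z₀ R := by
      rw [Metric.mem_ball, dist_eq_norm]; simpa using hu
    have h := Complex.hasSum_taylorSeries_on_ball hfd hz
    simp only [add_sub_cancel_left] at h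
    have hfun : (fun r => a r * u ^ r)
        = fun n => (n.factorial : ℂ)⁻¹ • u ^ n • iteratedDeriv n f z₀ := by
      funext r; simp only [ha, smul_eq_mul]; ring
    rw [hfun]; exact h
  -- bound on Taylor coefficients
  have hhalfR : ‖((R / 2 : ℝ) : ℂ)‖ < R := by
    rw [Complex.norm_real, Real.norm_eq_abs, abs_of_pos (by linarith)]; linarith
  obtain ⟨C, hCmem⟩ : BddAbove (Set.range fun r => ‖a r * ((R / 2 : ℝ) : ℂ) ^ r‖) :=
    ((hTaylor _ hhalfR).summable.tendsto_atTop_zero.norm.congr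
      (fun r => rfl)).bddAbove_range
  have hC' : ∀ r : ℕ, ‖a r‖ * (R / 2) ^ r ≤ C := by
    intro r
    have h := hCmem (Set.mem_range_self r)
    rwa [norm_mul, norm_pow, Complex.norm_real, Real.norm_eq_abs,
      abs_of_pos (by linarith : (0:ℝ) < R / 2)] at h
  have hC0 : 0 ≤ C := le_trans (by positivity) (hC' 0)
  set δ : ℝ := min (1/2 : ℝ) (R / (8 * (‖c‖ + 1))) with hδ
  have hδ0 : 0 < δ := lt_min (by norm_num) (by positivity)
  have key : ∀ w : ℂ, ‖w‖ < δ →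
      HasSum (fun n => b n * w ^ n) (slashDisc k z₀ f w) ∧
        Summable fun n => ‖b n‖ * ‖w‖ ^ n := by
    intro w hw
    have hδ2 : δ ≤ 1/2 := hδ ▸ min_le_left _ _
    have hδR : δ ≤ R / (8 * (‖c‖ + 1)) := hδ ▸ min_le_right _ _
    have hw2 : ‖w‖ < 1/2 := lt_of_lt_of_le hw hδ2
    have hwR : ‖w‖ < R / (8 * (‖c‖ + 1)) := lt_of_lt_of_le hw hδR
    have hw1 : ‖w‖ < 1 := by linarith
    have h1w : (1/2 : ℝ) ≤ ‖1 - w‖ := by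
      have h := norm_sub_norm_le (1 : ℂ) w
      rw [norm_one] at h
      linarith
    have hwne : (1 : ℂ) - w ≠ 0 := by
      intro h
      rw [h, norm_zero] at h1w; linarith
    set u : ℂ := c * w / (1 - w) with hu
    have h8 : ‖c‖ * ‖w‖ ≤ R / 8 := by
      have h0 : (0:ℝ) < 8 * (‖c‖ + 1) := by positivity
      calc ‖c‖ * ‖w‖ ≤ ‖c‖ * (R / (8 * (‖c‖ + 1))) :=
            mul_le_mul_of_nonneg_left hwR.le (norm_nonneg _)
        _ ≤ (‖c‖ + 1) * (R / (8 * (‖c‖ + 1))) := by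
            apply mul_le_mul_of_nonneg_right (by linarith) (by positivity)
        _ = R / 8 := by field_simp
    have hu4 : ‖u‖ ≤ R / 4 := by
      rw [hu, norm_div, norm_mul, div_le_iff₀ (by linarith : (0:ℝ) < ‖1 - w‖)]
      nlinarith [norm_nonneg c, norm_nonneg w]
    have huR : ‖u‖ < R := lt_of_le_of_lt hu4 (by linarith)
    have harg : (z₀ - (starRingEnd ℂ) z₀ * w) / (1 - w) = z₀ + u := by
      have hconj : (starRingEnd ℂ) z₀ = z₀ - c := by rw [← hc]; ring
      rw [hconj, hu]
      field_simp
      ring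
    have hTay := hTaylor u huR
    set F : ℕ × ℕ → ℂ := fun p =>
      a p.1 * c ^ p.1 * (((p.2 + (p.1 + k - 1)).choose (p.1 + k - 1) : ℕ) : ℂ) * w ^ (p.1 + p.2)
        with hF
    have hkr : ∀ r : ℕ, r + k - 1 + 1 = r + k := fun r => by omega
    -- row sums
    have hrow : ∀ r : ℕ, HasSum (fun j => F (r, j))
        (a r * c ^ r * w ^ r * ((1 - w) ^ (r + k))⁻¹) := by
      intro r
      have h := (hasSum_choose_mul_geometric_of_norm_lt_one (r + k - 1) hw1).mul_left
        (a r * c ^ r * w ^ r)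
      rw [hkr r] at h
      have hfun : (fun j => F (r, j)) = fun j =>
          (a r * c ^ r * w ^ r) * ((((j + (r + k - 1)).choose (r + k - 1) : ℕ) : ℂ) * w ^ j) := by
        funext j
        simp only [hF, pow_add]
        ring
      rw [one_div] at h
      rw [hfun]
      exact h
    -- row sums in norm
    have hwnorm1 : ‖‖w‖‖ < 1 := by rwa [Real.norm_eq_abs, _root_.abs_of_nonneg (norm_nonneg w)]
    have hrownorm : ∀ r : ℕ, HasSum (fun j => ‖F (r, j)‖)
        (‖a r‖ * ‖c‖ ^ r * ‖w‖ ^ r * ((1 - ‖w‖) ^ (r + k))⁻¹) := by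
      intro r
      have h := (hasSum_choose_mul_geometric_of_norm_lt_one (𝕜 := ℝ) (r + k - 1) hwnorm1).mul_left
        (‖a r‖ * ‖c‖ ^ r * ‖w‖ ^ r)
      rw [hkr r] at h
      have hfun : (fun j => ‖F (r, j)‖) = fun j =>
          (‖a r‖ * ‖c‖ ^ r * ‖w‖ ^ r) * ((((j + (r + k - 1)).choose (r + k - 1) : ℕ) : ℝ) * ‖w‖ ^ j) := by
        funext j
        simp only [hF, norm_mul, norm_pow, Complex.norm_natCast, pow_add]
        ring
      rw [one_div] at h
      rw [hfun]
      exact h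
    -- column norm sums are summable
    have h1w' : (0:ℝ) < 1 - ‖w‖ := by linarith
    have hinv2 : (1 - ‖w‖)⁻¹ ≤ 2 := by
      rw [show (2:ℝ) = (1/2 : ℝ)⁻¹ by norm_num]
      exact inv_anti₀ (by norm_num) (by linarith)
    have hcolnorm : Summable (fun r : ℕ =>
        ‖a r‖ * ‖c‖ ^ r * ‖w‖ ^ r * ((1 - ‖w‖) ^ (r + k))⁻¹) := by
      have hM0 : (0:ℝ) ≤ ((1 - ‖w‖) ^ k)⁻¹ := by positivity
      refine Summable.of_nonneg_of_le (fun r => ?_) (fun r => ?_)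
        ((summable_geometric_two).mul_left (C * ((1 - ‖w‖) ^ k)⁻¹))
      · have : (0:ℝ) ≤ ((1 - ‖w‖) ^ (r + k))⁻¹ := by positivity
        positivity
      · have key1 : ‖c‖ * ‖w‖ * (1 - ‖w‖)⁻¹ ≤ R / 4 := by
          calc ‖c‖ * ‖w‖ * (1 - ‖w‖)⁻¹ ≤ (R / 8) * 2 := by
                apply mul_le_mul h8 hinv2 (by positivity) (by linarith)
            _ = R / 4 := by ring
        calc ‖a r‖ * ‖c‖ ^ r * ‖w‖ ^ r * ((1 - ‖w‖) ^ (r + k))⁻¹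
            = (‖a r‖ * (‖c‖ * ‖w‖ * (1 - ‖w‖)⁻¹) ^ r) * ((1 - ‖w‖) ^ k)⁻¹ := by
              rw [pow_add, mul_inv, ← inv_pow, mul_pow, mul_pow]; ring
          _ ≤ (‖a r‖ * (R / 4) ^ r) * ((1 - ‖w‖) ^ k)⁻¹ := by
              refine mul_le_mul_of_nonneg_right ?_ hM0
              exact mul_le_mul_of_nonneg_left
                (pow_le_pow_left₀ (by positivity) key1 r) (norm_nonneg _)
          _ = (‖a r‖ * (R / 2) ^ r) * ((1/2 : ℝ) ^ r * ((1 - ‖w‖) ^ k)⁻¹) := by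
              rw [show (R / 4 : ℝ) = (R / 2) * (1/2) by ring, mul_pow]; ring
          _ ≤ C * ((1/2 : ℝ) ^ r * ((1 - ‖w‖) ^ k)⁻¹) := by
              refine mul_le_mul_of_nonneg_right (hC' r) (by positivity)
          _ = C * ((1 - ‖w‖) ^ k)⁻¹ * (1/2) ^ r := by ring
    -- summability of F in norm
    have hFnorm : Summable fun p : ℕ × ℕ => ‖F p‖ := by
      refine (summable_prod_of_nonneg (fun p => norm_nonneg (F p))).mpr
        ⟨fun r => (hrownorm r).summable, ?_⟩
      exact hcolnorm.congr fun r => ((hrownorm r).tsum_eq).symm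
    have hFsummable : Summable F := hFnorm.of_norm
    -- total sum of F
    have hcol2 : HasSum (fun r => a r * c ^ r * w ^ r * ((1 - w) ^ (r + k))⁻¹)
        (((1 - w) ^ k)⁻¹ * f (z₀ + u)) := by
      have h := hTay.mul_left (((1 - w) ^ k)⁻¹)
      have hfun : (fun r => ((1 - w) ^ k)⁻¹ * (a r * u ^ r))
          = fun r => a r * c ^ r * w ^ r * ((1 - w) ^ (r + k))⁻¹ := by
        funext r
        rw [hu, div_pow, div_eq_mul_inv, pow_add, mul_inv, mul_pow]
        ring
      rwa [hfun] at h
    have hFS : HasSum F (((1 - w) ^ k)⁻¹ * f (z₀ + u)) := by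
      obtain ⟨S, hS⟩ := hFsummable
      have := hS.prod_fiberwise hrow
      rwa [this.unique hcol2] at hS
    -- regroup along antidiagonals
    have hFe : HasSum (F ∘ (Finset.HasAntidiagonal.sigmaAntidiagonalEquivProd (A := ℕ)))
        (((1 - w) ^ k)⁻¹ * f (z₀ + u)) := (Equiv.hasSum_iff _).mpr hFS
    have hsig : HasSum (fun n => ∑ p ∈ Finset.HasAntidiagonal.antidiagonal n, F p)
        (((1 - w) ^ k)⁻¹ * f (z₀ + u)) := by
      refine hFe.sigma fun n => ?_
      simp [Function.comp, Finset.HasAntidiagonal.sigmaAntidiagonalEquivProd]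
      exact (Finset.HasAntidiagonal.antidiagonal n).hasSum F
    have hfib : ∀ n : ℕ, ∑ p ∈ Finset.HasAntidiagonal.antidiagonal n, F p =
        (∑ r ∈ Finset.range (n + 1), ((n + k - 1).choose (r + k - 1) : ℂ) * a r * c ^ r) * w ^ n := by
      intro n
      rw [Finset.Nat.sum_antidiagonal_eq_sum_range_succ_mk, Finset.sum_mul]
      refine Finset.sum_congr rfl fun r hr => ?_
      rw [Finset.mem_range] at hr
      have h1 : r + (n - r) = n := by omega
      have h2 : (n - r) + (r + k - 1) = n + k - 1 := by omega
      simp only [hF, h1, h2]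
      ring
    have hval : slashDisc k z₀ f w = c ^ (k / 2) * (((1 - w) ^ k)⁻¹ * f (z₀ + u)) := by
      rw [slashDisc, harg, zpow_neg, zpow_natCast, ← hcdef]
      ring
    constructor
    · have hsig2 := hsig.mul_left (c ^ (k / 2))
      have hfun : (fun n => c ^ (k / 2) * ∑ p ∈ Finset.HasAntidiagonal.antidiagonal n, F p)
          = fun n => b n * w ^ n := by
        funext n
        rw [hfib n, hb]
        ring
      rw [hfun] at hsig2
      rwa [hval]
    · have hnormsig : Summable (fun n => ∑ p ∈ Finset.HasAntidiagonal.antidiagonal n, ‖F p‖) := by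
        have h1 : Summable ((fun p => ‖F p‖) ∘ (Finset.HasAntidiagonal.sigmaAntidiagonalEquivProd (A := ℕ))) :=
          (Equiv.summable_iff _).mpr hFnorm
        have h2 := h1.sigma
        refine h2.congr fun n => ?_
        simpa [Function.comp, Finset.HasAntidiagonal.sigmaAntidiagonalEquivProd] using
          (Finset.HasAntidiagonal.antidiagonal n).tsum_subtype fun p => ‖F p‖
      refine Summable.of_nonneg_of_le (fun n => by positivity) (fun n => ?_)
        (hnormsig.mul_left ‖c ^ (k / 2)‖)
      calc ‖b n‖ * ‖w‖ ^ n = ‖b n * w ^ n‖ := by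
            rw [norm_mul (b n) (w ^ n), norm_pow]
        _ = ‖c ^ (k / 2) * ∑ p ∈ Finset.HasAntidiagonal.antidiagonal n, F p‖ := by
            congr 1
            simp only [hb]
            rw [hfib n]
            ring
        _ ≤ ‖c ^ (k / 2)‖ * ∑ p ∈ Finset.HasAntidiagonal.antidiagonal n, ‖F p‖ := by
            rw [norm_mul]
            exact mul_le_mul_of_nonneg_left (norm_sum_le _ _) (norm_nonneg _)
  set t : NNReal := ⟨δ / 2, by positivity⟩ with ht
  have htδ : (t : ℝ) < δ := by
    have : (t : ℝ) = δ / 2 := rfl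
    rw [this]; linarith
  have ht0 : (0 : ℝ) < (t : ℝ) := by
    have : (t : ℝ) = δ / 2 := rfl
    rw [this]; linarith
  have hsummt : Summable (fun n => ‖b n‖ * (t : ℝ) ^ n) := by
    have h := (key ((t : ℝ) : ℂ) (by rwa [Complex.norm_real, Real.norm_eq_abs,
      _root_.abs_of_pos ht0])).2
    rwa [Complex.norm_real, Real.norm_eq_abs, _root_.abs_of_pos ht0] at h
  set q := FormalMultilinearSeries.ofScalars ℂ b with hq
  have hqn : ∀ n, ‖q n‖ ≤ ‖b n‖ := by
    intro n
    rw [hq, FormalMultilinearSeries.ofScalars]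
    refine (norm_smul_le (b n) (ContinuousMultilinearMap.mkPiAlgebraFin ℂ n ℂ)).trans ?_
    calc ‖b n‖ * ‖ContinuousMultilinearMap.mkPiAlgebraFin ℂ n ℂ‖
        ≤ ‖b n‖ * 1 := by
          refine mul_le_mul_of_nonneg_left ?_ (norm_nonneg _)
          simpa using ContinuousMultilinearMap.norm_mkPiAlgebraFin_le (𝕜 := ℂ) (n := n) (A := ℂ)
      _ = ‖b n‖ := mul_one _
  have hrad : (t : ENNReal) ≤ q.radius := by
    refine q.le_radius_of_summable ?_
    refine Summable.of_nonneg_of_le (fun n => by positivity) (fun n => ?_) hsummt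
    exact mul_le_mul_of_nonneg_right (hqn n) (by positivity)
  have hball : HasFPowerSeriesOnBall (slashDisc k z₀ f) q 0 t := by
    refine ⟨hrad, by exact_mod_cast ENNReal.coe_pos.mpr (by exact_mod_cast ht0), ?_⟩
    intro y hy
    have h'y : ‖y‖ < (t : ℝ) := by
      rw [mem_emetric_ball_zero_iff] at hy
      exact_mod_cast hy
    have h := (key y (h'y.trans htδ)).1
    rw [zero_add]
    have hfun : (fun n => q n fun _ => y) = fun n => b n * y ^ n := by
      funext n
      rw [hq, FormalMultilinearSeries.ofScalars_apply_eq, smul_eq_mul]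
    rw [hfun]
    exact h
  have hiter : iteratedDeriv m (slashDisc k z₀ f) 0 = (m.factorial : ℂ) * b m := by
    have h := hball.factorial_smul (1 : ℂ) m
    rw [← iteratedDeriv_eq_iteratedFDeriv] at h
    rw [hq, FormalMultilinearSeries.ofScalars_apply_eq, one_pow, smul_eq_mul, mul_one] at h
    rw [← h, nsmul_eq_mul]
  rw [fourierCoeffAt, hiter, mul_comm ((m.factorial : ℂ)) (b m), mul_div_assoc,
    div_self (by exact_mod_cast m.factorial_ne_zero : (m.factorial : ℂ) ≠ 0), mul_one, hc]
  simp only [hb]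
  rw [Finset.mul_sum]
  refine Finset.sum_congr rfl fun r hr => ?_
  simp only [ha]
  rw [pow_add]
  ring

end
end

section
/- Let k be an even integer and let f ∈ S_k(SL(2,ℤ)) be not identically zero. For z₀ ∈ ℍ let N(z₀) denote the order of the stabilizer of z₀ in PSL(2,ℤ) (so N(z₀) ∈ {1,2,3}, with N > 1 only at points SL(2,ℤ)-equivalent to i or to e^{2πi/3}). Then the set A_f ∩ ℍ = { z₀ ∈ ℍ : there exists n ∈ ℤ_{≥0} with n + k/2 ≡ 0 (mod N(z₀)) and c_{z₀}(f,n) = 0 }, regarded as a subset of ℂ, has Lebesgue measure zero. -/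
noncomputable section

open Complex Real MeasureTheory
open Topology Filter Set

private lemma isOpenUH : IsOpen {z : ℂ | 0 < z.im} :=
  isOpen_lt continuous_const Complex.continuous_im

private lemma iteratedDerivWithin_of_isOpen' {s : Set ℂ} {x : ℂ} (n : ℕ) (hs : IsOpen s)
    (hx : x ∈ s) (f : ℂ → ℂ) : iteratedDerivWithin n f s x = iteratedDeriv n f x := by
  rw [iteratedDerivWithin_eq_iteratedFDerivWithin, iteratedDeriv_eq_iteratedFDeriv,
    iteratedFDerivWithin_of_isOpen n hs hx]

private lemma iteratedDeriv_comb (n : ℕ) {F G : ℂ → ℂ} {x : ℂ}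
    (hF : AnalyticAt ℂ F x) (hG : AnalyticAt ℂ G x) (c d : ℂ) :
    iteratedDeriv n (fun w => c * F w + d * G w) x
      = c * iteratedDeriv n F x + d * iteratedDeriv n G x := by
  classical
  set s := {y : ℂ | AnalyticAt ℂ F y} ∩ {y : ℂ | AnalyticAt ℂ G y} with hs_def
  have hs : IsOpen s := (isOpen_analyticAt ℂ F).inter (isOpen_analyticAt ℂ G)
  have hx : x ∈ s := ⟨hF, hG⟩
  have hFd : ContDiffOn ℂ n F s := fun y hy => (hy.1.contDiffAt).contDiffWithinAt
  have hGd : ContDiffOn ℂ n G s := fun y hy => (hy.2.contDiffAt).contDiffWithinAt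
  have h1 : ContDiffOn ℂ n (fun w => c * F w) s := contDiffOn_const.mul hFd
  have h2 : ContDiffOn ℂ n (fun w => d * G w) s := contDiffOn_const.mul hGd
  rw [← iteratedDerivWithin_of_isOpen' n hs hx]
  have hfun : (fun w => c * F w + d * G w) = (fun w => c * F w) + (fun w => d * G w) := rfl
  rw [hfun, iteratedDerivWithin_add hx hs.uniqueDiffOn (h1 x hx) (h2 x hx),
    iteratedDerivWithin_const_mul hx hs.uniqueDiffOn c (hFd x hx),
    iteratedDerivWithin_const_mul hx hs.uniqueDiffOn d (hGd x hx),
    iteratedDerivWithin_of_isOpen' n hs hx, iteratedDerivWithin_of_isOpen' n hs hx]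

private def mobT (z₀ w : ℂ) : ℂ := (z₀ - (starRingEnd ℂ) z₀ * w) / (1 - w)

private def HT (f : ℂ → ℂ) (z₀ : ℂ) (m j : ℕ) (w : ℂ) : ℂ :=
  ((1 - w)⁻¹) ^ m * deriv^[j] f (mobT z₀ w)

private lemma analyticAt_HT {f : ℂ → ℂ} (hA : AnalyticOnNhd ℂ f {z : ℂ | 0 < z.im})
    {z₀ : ℂ} (hz : 0 < z₀.im) (m j : ℕ) : AnalyticAt ℂ (HT f z₀ m j) 0 := by
  have h10 : (1 : ℂ) - 0 ≠ 0 := by norm_num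
  have hden : AnalyticAt ℂ (fun w : ℂ => 1 - w) 0 := analyticAt_const.sub analyticAt_id
  have hmob : AnalyticAt ℂ (mobT z₀) 0 :=
    (analyticAt_const.sub (analyticAt_const.mul analyticAt_id)).div hden h10
  have hval : mobT z₀ 0 = z₀ := by simp [mobT]
  have hgj : AnalyticAt ℂ (deriv^[j] f) (mobT z₀ 0) := by
    rw [hval]; exact (hA.iterated_deriv j) z₀ hz
  have h := ((hden.inv h10).pow m).mul (hgj.comp hmob)
  unfold HT
  exact h

private lemma hasDerivAt_HT {f : ℂ → ℂ} (hA : AnalyticOnNhd ℂ f {z : ℂ | 0 < z.im})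
    (z₀ : ℂ) (m j : ℕ) {w : ℂ} (hw1 : 1 - w ≠ 0) (hw2 : 0 < (mobT z₀ w).im) :
    HasDerivAt (HT f z₀ m j)
      ((m : ℂ) * HT f z₀ (m+1) j w
        + (z₀ - (starRingEnd ℂ) z₀) * HT f z₀ (m+2) (j+1) w) w := by
  have hden : HasDerivAt (fun w : ℂ => 1 - w) (-1) w := (hasDerivAt_id w).const_sub 1
  have hinv : HasDerivAt (fun w : ℂ => (1 - w)⁻¹) (((1 - w)⁻¹) ^ 2) w := by
    have h := hden.inv hw1
    refine h.congr_deriv ?_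
    field_simp
  have hpow : HasDerivAt (fun w : ℂ => ((1 - w)⁻¹) ^ m) ((m : ℂ) * ((1 - w)⁻¹) ^ (m + 1)) w := by
    have h := hinv.pow m
    refine h.congr_deriv ?_
    cases m with
    | zero => simp
    | succ i =>
      simp only [Nat.add_sub_cancel]
      push_cast
      ring
  have hmob : HasDerivAt (mobT z₀) ((z₀ - (starRingEnd ℂ) z₀) * ((1 - w)⁻¹) ^ 2) w := by
    have hnum : HasDerivAt (fun w : ℂ => z₀ - (starRingEnd ℂ) z₀ * w) (-((starRingEnd ℂ) z₀)) w := by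
      simpa using ((hasDerivAt_id w).const_mul ((starRingEnd ℂ) z₀)).const_sub z₀
    have h := hnum.div hden hw1
    refine h.congr_deriv ?_
    field_simp
    ring
  have hg : HasDerivAt (deriv^[j] f) (deriv^[j+1] f (mobT z₀ w)) (mobT z₀ w) := by
    have hd : DifferentiableAt ℂ (deriv^[j] f) (mobT z₀ w) :=
      ((hA.iterated_deriv j) _ hw2).differentiableAt
    have h := hd.hasDerivAt
    rwa [show deriv (deriv^[j] f) (mobT z₀ w) = deriv^[j+1] f (mobT z₀ w) by
      rw [Function.iterate_succ_apply' deriv j f]] at h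
  have hcomp : HasDerivAt (fun w => deriv^[j] f (mobT z₀ w))
      (deriv^[j+1] f (mobT z₀ w) * ((z₀ - (starRingEnd ℂ) z₀) * ((1 - w)⁻¹) ^ 2)) w :=
    hg.comp w hmob
  have h := hpow.mul hcomp
  refine h.congr_deriv ?_
  simp only [HT]
  ring

private lemma keyT {f : ℂ → ℂ} (hA : AnalyticOnNhd ℂ f {z : ℂ | 0 < z.im}) :
    ∀ n m j : ℕ, ∃ a : ℕ → ℕ,
      a n = 1 ∧ (∀ i, n < i → a i = 0) ∧ (1 ≤ m → 1 ≤ a 0) ∧ (1 ≤ n → 1 ≤ a 1) ∧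
      ∀ z₀ : ℂ, 0 < z₀.im →
        iteratedDeriv n (HT f z₀ m j) 0
          = ∑ i ∈ Finset.range (n+1),
              (a i : ℂ) * (z₀ - (starRingEnd ℂ) z₀) ^ i * deriv^[j + i] f z₀ := by
  intro n
  induction n with
  | zero =>
    intro m j
    refine ⟨fun i => if i = 0 then 1 else 0, rfl, ?_, fun _ => le_rfl, fun h => by omega, ?_⟩
    · intro i hi
      simp [show i ≠ 0 by omega]
    · intro z₀ hz₀
      simp [HT, mobT]
  | succ n IH =>
    intro m j
    obtain ⟨a₁, h₁n, h₁z, h₁0, -, h₁f⟩ := IH (m+1) j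
    obtain ⟨a₂, h₂n, h₂z, h₂0, -, h₂f⟩ := IH (m+2) (j+1)
    refine ⟨fun i => if i = 0 then m * a₁ 0 else m * a₁ i + a₂ (i-1), ?_, ?_, ?_, ?_, ?_⟩
    · simp [h₁z (n+1) (lt_add_one n), h₂n]
    · intro i hi
      have hi0 : i ≠ 0 := by omega
      simp [hi0, h₁z i (by omega), h₂z (i-1) (by omega)]
    · intro hm
      have h10 : 1 ≤ a₁ 0 := h₁0 (by omega)
      exact Nat.mul_pos hm h10
    · intro _
      have h20 : 1 ≤ a₂ 0 := h₂0 (by omega)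
      simp only [if_neg one_ne_zero, Nat.sub_self]
      omega
    · intro z₀ hz₀
      rw [iteratedDeriv_succ']
      have hev : deriv (HT f z₀ m j) =ᶠ[𝓝 (0:ℂ)]
          fun w => (m:ℂ) * HT f z₀ (m+1) j w
            + (z₀ - (starRingEnd ℂ) z₀) * HT f z₀ (m+2) (j+1) w := by
        have h1 : ∀ᶠ w : ℂ in 𝓝 0, 1 - w ≠ 0 := by
          have h := eventually_ne_nhds (show (0:ℂ) ≠ 1 by norm_num)
          exact h.mono fun w hw => sub_ne_zero_of_ne (Ne.symm hw)
        have hc : ContinuousAt (mobT z₀) 0 := by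
          apply ContinuousAt.div
          · fun_prop
          · fun_prop
          · norm_num
        have h2 : ∀ᶠ w : ℂ in 𝓝 0, 0 < (mobT z₀ w).im := by
          have hmem : {z : ℂ | 0 < z.im} ∈ 𝓝 (mobT z₀ 0) :=
            isOpenUH.mem_nhds (by simpa [mobT] using hz₀)
          exact hc hmem
        filter_upwards [h1, h2] with w hw1 hw2
        exact (hasDerivAt_HT hA z₀ m j hw1 hw2).deriv
      rw [hev.iteratedDeriv_eq n,
        iteratedDeriv_comb n (analyticAt_HT hA hz₀ (m+1) j) (analyticAt_HT hA hz₀ (m+2) (j+1)) _ _,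
        h₁f z₀ hz₀, h₂f z₀ hz₀]
      set C := z₀ - (starRingEnd ℂ) z₀ with hC
      have e1 : ∑ i ∈ Finset.range (n+1), (a₁ i : ℂ) * C ^ i * deriv^[j + i] f z₀
          = ∑ i ∈ Finset.range (n+2), (a₁ i : ℂ) * C ^ i * deriv^[j + i] f z₀ := by
        rw [Finset.sum_range_succ (fun i => (a₁ i : ℂ) * C ^ i * deriv^[j + i] f z₀) (n+1)]
        simp [h₁z (n+1) (lt_add_one n)]
      rw [e1]
      rw [Finset.sum_range_succ' (fun i => (a₁ i : ℂ) * C ^ i * deriv^[j + i] f z₀) (n+1),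
        Finset.sum_range_succ'
          (fun i => (((if i = 0 then m * a₁ 0 else m * a₁ i + a₂ (i-1) : ℕ)) : ℂ)
            * C ^ i * deriv^[j + i] f z₀) (n+1)]
      simp only [if_neg (Nat.succ_ne_zero _), if_pos rfl, Nat.add_sub_cancel]
      rw [mul_add, Finset.mul_sum, Finset.mul_sum, add_right_comm, ← Finset.sum_add_distrib]
      have hterm : ∀ i ∈ Finset.range (n+1),
          (m:ℂ) * ((a₁ (i+1) : ℂ) * C ^ (i+1) * deriv^[j + (i+1)] f z₀)
            + C * ((a₂ i : ℂ) * C ^ i * deriv^[j + 1 + i] f z₀)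
          = ((m * a₁ (i+1) + a₂ i : ℕ) : ℂ) * C ^ (i+1) * deriv^[j + (i+1)] f z₀ := by
        intro i _
        have hidx : j + 1 + i = j + (i+1) := by omega
        rw [hidx]
        push_cast
        ring
      rw [Finset.sum_congr rfl hterm]
      push_cast
      ring

private lemma measurable_ext {f : ℂ → ℂ} (hol : ∀ z : ℂ, 0 < z.im → DifferentiableAt ℂ f z) :
    Measurable (fun z : ℂ => if 0 < z.im then f z else 0) := by
  classical
  apply measurable_of_isOpen
  intro s hs
  have hcont : ContinuousOn f {z : ℂ | 0 < z.im} := fun z hz =>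
    ((hol z hz).continuousAt).continuousWithinAt
  have hopen : IsOpen ({z : ℂ | 0 < z.im} ∩ f ⁻¹' s) :=
    hcont.isOpen_inter_preimage isOpenUH hs
  have heq : (fun z : ℂ => if 0 < z.im then f z else 0) ⁻¹' s
      = ({z : ℂ | 0 < z.im} ∩ f ⁻¹' s)
        ∪ ({z : ℂ | 0 < z.im}ᶜ ∩ (if (0:ℂ) ∈ s then Set.univ else ∅)) := by
    ext z
    by_cases hz : 0 < z.im <;> by_cases h0 : (0:ℂ) ∈ s <;> simp [hz, h0]
  rw [heq]
  refine hopen.measurableSet.union ((isOpenUH.measurableSet.compl).inter ?_)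
  split <;> simp

private lemma measurable_iter_deriv (g : ℂ → ℂ) (hg : Measurable g) (i : ℕ) :
    Measurable (deriv^[i] g) := by
  cases i with
  | zero => exact hg
  | succ i =>
    rw [show deriv^[i+1] g = deriv (deriv^[i] g) from Function.iterate_succ_apply' deriv i g]
    exact measurable_deriv _

private lemma const_on_UH {g : ℂ → ℂ} (hdiff : ∀ z : ℂ, 0 < z.im → DifferentiableAt ℂ g z)
    (hz : ∀ z : ℂ, 0 < z.im → deriv g z = 0) {x y : ℂ} (hx : 0 < x.im) (hy : 0 < y.im) :
    g x = g y := by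
  have hconv : Convex ℝ {z : ℂ | 0 < z.im} := convex_halfSpace_im_gt 0
  refine hconv.is_const_of_fderivWithin_eq_zero
    (fun z hz' => (hdiff z hz').differentiableWithinAt) ?_ hx hy
  intro z hz'
  rw [fderivWithin_of_isOpen isOpenUH hz']
  have h : HasDerivAt g 0 z := by
    have h0 := (hdiff z hz').hasDerivAt
    rwa [hz z hz'] at h0
  have h2 := h.hasFDerivAt.fderiv
  rw [h2]
  ext v
  simp

private lemma eventually_basic {z₀ : ℂ} (hz : 0 < z₀.im) :
    ∀ᶠ w : ℂ in 𝓝 0, 1 - w ≠ 0 ∧ 0 < (mobT z₀ w).im := by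
  have h1 : ∀ᶠ w : ℂ in 𝓝 0, 1 - w ≠ 0 := by
    have h := eventually_ne_nhds (show (0:ℂ) ≠ 1 by norm_num)
    exact h.mono fun w hw => sub_ne_zero_of_ne (Ne.symm hw)
  have hc : ContinuousAt (mobT z₀) 0 := by
    apply ContinuousAt.div
    · fun_prop
    · fun_prop
    · norm_num
  have h2 : ∀ᶠ w : ℂ in 𝓝 0, 0 < (mobT z₀ w).im := by
    have hmem : {z : ℂ | 0 < z.im} ∈ 𝓝 (mobT z₀ 0) :=
      isOpenUH.mem_nhds (by simpa [mobT] using hz)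
    exact hc hmem
  exact h1.and h2


/-- the set of points of `ℍ` where some non-trivial Fourier coefficient of a
nonzero cusp form vanishes has Lebesgue measure zero. -/
theorem measure_vanishing_set_eq_zero (k : ℕ) (hk : Even k) (f : ℂ → ℂ)
    (hf : IsCuspForm k f) (hne : ∃ z : ℂ, 0 < z.im ∧ f z ≠ 0) :
    volume {z₀ : ℂ | 0 < z₀.im ∧
      ∃ n : ℕ, stabOrder z₀ ∣ (n + k / 2) ∧ fourierCoeffAt k z₀ f n = 0} = 0 := by
  classical
  obtain ⟨hol, -, hdecay⟩ := hf
  obtain ⟨z₁, hz₁, hfz₁⟩ := hne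
  set g : ℂ → ℂ := fun z => if 0 < z.im then f z else 0 with hg_def
  have hgf : ∀ z : ℂ, 0 < z.im → g z = f z := fun z hz => if_pos hz
  have hgd : ∀ z : ℂ, 0 < z.im → DifferentiableAt ℂ g z := by
    intro z hz
    have hev : f =ᶠ[𝓝 z] g := by
      filter_upwards [isOpenUH.mem_nhds hz] with w hw
      exact (hgf w hw).symm
    exact (hol z hz).congr_of_eventuallyEq hev.symm
  have hAg : AnalyticOnNhd ℂ g {z : ℂ | 0 < z.im} :=
    DifferentiableOn.analyticOnNhd (fun z hz => (hgd z hz).differentiableWithinAt) isOpenUH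
  have hgmeas : Measurable g := measurable_ext hol
  choose a han haz ha0 ha1 hform using fun n => keyT hAg n k 0
  simp only [Nat.zero_add] at hform
  set P : ℕ → ℂ → ℂ := fun n z =>
    ∑ i ∈ Finset.range (n+1), (a n i : ℂ) * (z - (starRingEnd ℂ) z) ^ i * deriv^[i] g z
    with hP_def
  have hsub : {z₀ : ℂ | 0 < z₀.im ∧
      ∃ n : ℕ, stabOrder z₀ ∣ (n + k / 2) ∧ fourierCoeffAt k z₀ f n = 0}
      ⊆ ⋃ n : ℕ, {z : ℂ | 0 < z.im ∧ P n z = 0} := by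
    rintro z₀ ⟨hz₀, n, -, hc⟩
    refine Set.mem_iUnion.mpr ⟨n, hz₀, ?_⟩
    rw [fourierCoeffAt] at hc
    have hid : iteratedDeriv n (slashDisc k z₀ f) 0 = 0 := by
      rcases div_eq_zero_iff.mp hc with h | h
      · exact h
      · exact absurd h (by exact_mod_cast (Nat.factorial_ne_zero n))
    have hCne : (2 * Complex.I * (z₀.im : ℂ)) ^ (k / 2) ≠ 0 := by
      apply pow_ne_zero
      exact mul_ne_zero (mul_ne_zero two_ne_zero Complex.I_ne_zero)
        (Complex.ofReal_ne_zero.mpr (ne_of_gt hz₀))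
    have hev : slashDisc k z₀ f
        =ᶠ[𝓝 (0:ℂ)] fun w => (2 * Complex.I * (z₀.im : ℂ)) ^ (k / 2) * HT g z₀ k 0 w
          + 0 * HT g z₀ k 0 w := by
      filter_upwards [eventually_basic hz₀] with w hw
      obtain ⟨hw1, hw2⟩ := hw
      have hfg2 : f ((z₀ - (starRingEnd ℂ) z₀ * w) / (1 - w)) = g (mobT z₀ w) :=
        (hgf _ hw2).symm
      rw [slashDisc, hfg2, zpow_neg, zpow_natCast, ← inv_pow]
      simp only [HT, Function.iterate_zero, id_eq]
      ring
    have h0 : (2 * Complex.I * (z₀.im : ℂ)) ^ (k / 2) * iteratedDeriv n (HT g z₀ k 0) 0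
        + 0 * iteratedDeriv n (HT g z₀ k 0) 0 = 0 := by
      rw [← iteratedDeriv_comb n (analyticAt_HT hAg hz₀ k 0) (analyticAt_HT hAg hz₀ k 0) _ 0,
        ← hev.iteratedDeriv_eq n, hid]
    rw [hform n z₀ hz₀] at h0
    rw [zero_mul, add_zero, mul_eq_zero] at h0
    exact h0.resolve_left hCne
  refine measure_mono_null hsub (measure_iUnion_null fun n => ?_)
  -- fixed n
  set G : ℝ → ℂ → ℂ := fun x v =>
    ∑ i ∈ Finset.range (n+1), (a n i : ℂ) * (2 * v * Complex.I) ^ i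
      * deriv^[i] g ((x:ℂ) + v * Complex.I) with hG_def
  have hconj : ∀ x y : ℝ, ((x:ℂ) + (y:ℂ) * Complex.I)
      - (starRingEnd ℂ) ((x:ℂ) + (y:ℂ) * Complex.I) = 2 * (y:ℂ) * Complex.I := by
    intro x y
    simp only [map_add, map_mul, Complex.conj_ofReal, Complex.conj_I]
    ring
  have hPG : ∀ x y : ℝ, P n ((x:ℂ) + (y:ℂ) * Complex.I) = G x (y:ℂ) := by
    intro x y
    simp only [hP_def, hG_def]
    rw [hconj x y]
  set Ω : Set ℂ := {v : ℂ | 0 < v.re} with hΩ_def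
  have hΩo : IsOpen Ω := isOpen_lt continuous_const Complex.continuous_re
  have hΩc : Convex ℝ Ω := convex_halfSpace_re_gt 0
  have himΩ : ∀ (x : ℝ) (v : ℂ), v ∈ Ω → 0 < ((x:ℂ) + v * Complex.I).im := by
    intro x v hv
    simpa [hΩ_def] using hv
  have hGan : ∀ x : ℝ, AnalyticOnNhd ℂ (G x) Ω := by
    intro x
    apply DifferentiableOn.analyticOnNhd _ hΩo
    intro v hv
    apply DifferentiableAt.differentiableWithinAt
    apply DifferentiableAt.fun_sum
    intro i _
    have hinner : DifferentiableAt ℂ (fun v : ℂ => (x:ℂ) + v * Complex.I) v := by fun_prop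
    have houter : DifferentiableAt ℂ (deriv^[i] g) ((x:ℂ) + v * Complex.I) :=
      ((hAg.iterated_deriv i) _ (himΩ x v hv)).differentiableAt
    exact ((differentiableAt_const _).mul
      (by fun_prop : DifferentiableAt ℂ (fun v : ℂ => (2 * v * Complex.I) ^ i) v)).mul
      (houter.comp v hinner)
  set B : Set ℝ := {x : ℝ | Set.EqOn (G x) 0 Ω} with hB_def
  have hBfin : B.Finite := by
    rw [← Set.not_infinite]
    intro hBinf
    have e : ℕ ↪ ↑B := Set.Infinite.natEmbedding B hBinf
    set xv : Fin (n+1) → ℝ := fun i => ((e (i:ℕ)) : ℝ) with hxv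
    have hxvB : ∀ i, xv i ∈ B := fun i => (e (i:ℕ)).2
    have hxvinj : Function.Injective xv := by
      intro i j h
      exact Fin.ext (e.injective (Subtype.coe_injective h))
    have hvec : ∀ z : ℂ, 0 < z.im →
        (fun jj : Fin (n+1) => (a n (jj:ℕ) : ℂ) * 2 ^ (jj:ℕ) * deriv^[(jj:ℕ)] g z) = 0 := by
      intro z hz
      set M : Matrix (Fin (n+1)) (Fin (n+1)) ℂ :=
        Matrix.vandermonde (fun i => z - (xv i : ℂ)) with hM
      have hdet : M.det ≠ 0 := by
        rw [hM, Matrix.det_vandermonde_ne_zero_iff]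
        intro i j h
        apply hxvinj
        have h2 : ((xv i : ℝ) : ℂ) = ((xv j : ℝ) : ℂ) := by linear_combination -h
        exact_mod_cast h2
      apply Matrix.eq_zero_of_mulVec_eq_zero hdet
      funext i
      set v : ℂ := (z - (xv i : ℂ)) * (-Complex.I) with hv
      have hvI : v * Complex.I = z - (xv i : ℂ) := by
        rw [hv, mul_assoc, neg_mul, Complex.I_mul_I, neg_neg, mul_one]
      have hvΩ : v ∈ Ω := by
        show 0 < v.re
        rw [hv]
        simpa using hz
      have h0 : G (xv i) v = 0 := by
        have h := (hxvB i) hvΩ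
        simpa using h
      rw [hG_def] at h0
      simp only at h0
      have hz2 : ((xv i : ℝ) : ℂ) + v * Complex.I = z := by rw [hvI]; ring
      have h2v : 2 * v * Complex.I = 2 * (z - (xv i : ℂ)) := by rw [mul_assoc, hvI]
      rw [hz2, h2v] at h0
      simp only [hM, Matrix.mulVec, dotProduct, Matrix.vandermonde, Matrix.of_apply,
        Pi.zero_apply]
      have hterms : ∀ jj ∈ (Finset.univ : Finset (Fin (n+1))),
          (z - (xv i : ℂ)) ^ (jj:ℕ) * ((a n (jj:ℕ) : ℂ) * 2 ^ (jj:ℕ) * deriv^[(jj:ℕ)] g z)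
            = (a n (jj:ℕ) : ℂ) * (2 * (z - (xv i : ℂ))) ^ (jj:ℕ) * deriv^[(jj:ℕ)] g z := by
        intro jj _
        rw [mul_pow]
        ring
      rw [Finset.sum_congr rfl hterms,
        Fin.sum_univ_eq_sum_range
          (fun t => (a n t : ℂ) * (2 * (z - (xv i : ℂ))) ^ t * deriv^[t] g z) (n+1)]
      exact h0
    rcases Nat.eq_zero_or_pos n with hn0 | hnpos
    · have h1 := congrFun (hvec z₁ hz₁) ⟨0, by omega⟩
      have hA0 : a n 0 = 1 := by rw [hn0]; exact han 0
      simp only [hA0, Pi.zero_apply, Nat.cast_one, pow_zero, one_mul, mul_one,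
        Function.iterate_zero, id_eq] at h1
      rw [hgf z₁ hz₁] at h1
      exact hfz₁ h1
    · have hane : (a n 1 : ℂ) ≠ 0 :=
        Nat.cast_ne_zero.mpr (by have := ha1 n hnpos; omega)
      have hder : ∀ z : ℂ, 0 < z.im → deriv g z = 0 := by
        intro z hz
        have h2 := congrFun (hvec z hz) ⟨1, by omega⟩
        simp only [Pi.zero_apply, pow_one, Function.iterate_one] at h2
        rcases mul_eq_zero.mp h2 with h3 | h3
        · rcases mul_eq_zero.mp h3 with h4 | h4
          · exact absurd h4 hane
          · exact absurd h4 two_ne_zero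
        · exact h3
      have hconst : ∀ z : ℂ, 0 < z.im → g z = g z₁ := fun z hz => const_on_UH hgd hder hz hz₁
      obtain ⟨Y, hY⟩ := hdecay (‖f z₁‖) (norm_pos_iff.mpr hfz₁)
      set y0 : ℝ := max Y 0 + 1 with hy0
      have hYy : Y < y0 := by
        have := le_max_left Y 0
        rw [hy0]; linarith
      have hy0p : 0 < y0 := by
        have := le_max_right Y 0
        rw [hy0]; linarith
      have hzim : 0 < (((0:ℝ):ℂ) + (y0:ℂ) * Complex.I).im := by simpa using hy0p
      have hfg2 : f (((0:ℝ):ℂ) + (y0:ℂ) * Complex.I) = f z₁ := by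
        rw [← hgf _ hzim, hconst _ hzim, hgf _ hz₁]
      have hlt := hY 0 y0 hYy
      rw [hfg2] at hlt
      exact lt_irrefl _ hlt
  have hslice : ∀ x : ℝ, x ∉ B → volume {y : ℝ | 0 < y ∧ G x (y:ℂ) = 0} = 0 := by
    intro x hx
    set Z : Set ℂ := {v : ℂ | 0 < v.re ∧ G x v = 0} with hZ
    have hdisc : DiscreteTopology ↑Z := by
      rw [discreteTopology_subtype_iff]
      intro v hv
      rcases ((hGan x) v hv.1).eventually_eq_zero_or_eventually_ne_zero with h | h
      · refine absurd ((hGan x).eqOn_zero_of_preconnected_of_eventuallyEq_zero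
          hΩc.isPreconnected hv.1 ?_) hx
        filter_upwards [h] with w hw
        simpa using hw
      · have h1 : ∀ᶠ w in 𝓝[≠] v ⊓ Filter.principal Z, G x w ≠ 0 :=
          h.filter_mono inf_le_left
        have h2 : ∀ᶠ w in 𝓝[≠] v ⊓ Filter.principal Z, w ∈ Z :=
          (Filter.eventually_principal.mpr (fun w hw => hw)).filter_mono inf_le_right
        exact eventually_false_iff_eq_bot.mp ((h1.and h2).mono fun w hw => hw.1 hw.2.2)
    have hZc : Z.Countable := by
      haveI := hdisc
      exact Set.countable_coe_iff.mp (TopologicalSpace.separableSpace_iff_countable.mp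
        inferInstance)
    have hsub2 : {y : ℝ | 0 < y ∧ G x (y:ℂ) = 0} ⊆ (fun y : ℝ => (y:ℂ)) ⁻¹' Z := by
      intro y hy
      exact ⟨by simpa using hy.1, hy.2⟩
    exact measure_mono_null hsub2 ((hZc.preimage Complex.ofReal_injective).measure_zero _)
  have hQmeas : Measurable (P n) := by
    apply Finset.measurable_sum
    intro i _
    refine (measurable_const.mul ((measurable_id.sub ?_).pow_const i)).mul
      (measurable_iter_deriv g hgmeas i)
    exact Complex.continuous_conj.measurable
  set T : Set (ℝ × ℝ) :=
    {p : ℝ × ℝ | 0 < p.2 ∧ P n ((p.1:ℂ) + (p.2:ℂ) * Complex.I) = 0} with hT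
  have hTmeas : MeasurableSet T := by
    have h1 : MeasurableSet {p : ℝ × ℝ | 0 < p.2} :=
      measurableSet_lt measurable_const measurable_snd
    have h2 : Measurable fun p : ℝ × ℝ => P n ((p.1:ℂ) + (p.2:ℂ) * Complex.I) :=
      hQmeas.comp (by fun_prop)
    exact h1.inter (h2 (measurableSet_singleton 0))
  have hST : {z : ℂ | 0 < z.im ∧ P n z = 0} = Complex.measurableEquivRealProd ⁻¹' T := by
    ext z
    simp only [hT, Set.mem_preimage, Set.mem_setOf_eq, Complex.measurableEquivRealProd_apply]
    rw [Complex.re_add_im]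
  rw [hST, Complex.volume_preserving_equiv_real_prod.measure_preimage hTmeas.nullMeasurableSet,
    Measure.volume_eq_prod, Measure.measure_prod_null hTmeas]
  have hae : ∀ᵐ x : ℝ, x ∉ B := measure_eq_zero_iff_ae_notMem.mp (hBfin.countable.measure_zero _)
  filter_upwards [hae] with x hxB
  have hpre : Prod.mk x ⁻¹' T = {y : ℝ | 0 < y ∧ G x (y:ℂ) = 0} := by
    ext y
    simp only [hT, Set.mem_preimage, Set.mem_setOf_eq]
    rw [hPG x y]
  show volume (Prod.mk x ⁻¹' T) = 0
  rw [hpre]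
  exact hslice x hxB


end
end

section
/- Let K be a number field with ring of integers 𝓞_K, let a₁,a₂,a₃,a₄ ∈ 𝓞_K[t], let q_n ∈ 𝓞_K[t] be given by the recursion, and let l ∈ ℤ_{≥1}. Then the sequence of constant terms q_m(0) modulo l𝓞_K is eventually periodic; more precisely, there exist integers α ≥ 0 and β ≥ 1 with α + β ≤ l · |𝓞_K/l𝓞_K|^{2l} such that q_{m+β}(0) ≡ q_m(0) (mod l𝓞_K) for all m ≥ α. -/
noncomputable section

open Complex Real MeasureTheory

open Polynomial

/-- truncated equality of polynomials: coefficients below `l` agree. -/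
def TruncEq {S : Type*} [CommRing S] (l : ℕ) (f g : Polynomial S) : Prop :=
  ∀ i < l, f.coeff i = g.coeff i

namespace TruncEq

variable {S : Type*} [CommRing S] {l : ℕ} {f g f' g' : Polynomial S}

lemma add (h : TruncEq l f g) (h' : TruncEq l f' g') : TruncEq l (f + f') (g + g') := by
  intro i hi
  simp [coeff_add, h i hi, h' i hi]

lemma mul_left (a : Polynomial S) (h : TruncEq l f g) : TruncEq l (a * f) (a * g) := by
  intro k hk
  rw [coeff_mul, coeff_mul]
  refine Finset.sum_congr rfl fun x hx => ?_
  rw [Finset.HasAntidiagonal.mem_antidiagonal] at hx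
  rw [h x.2 (by omega)]

lemma deriv (hl : (l : S) = 0) (h : TruncEq l f g) :
    TruncEq l (derivative f) (derivative g) := by
  intro k hk
  rw [coeff_derivative, coeff_derivative]
  rcases lt_or_eq_of_le (Nat.succ_le_of_lt hk) with h' | h'
  · rw [h (k + 1) h']
  · have : ((k : S) + 1) = 0 := by
      have : (((k + 1 : ℕ)) : S) = 0 := by rw [show k + 1 = l by omega]; exact hl
      push_cast at this; exact this
    rw [this, mul_zero, mul_zero]

end TruncEq

lemma natCast_eq_of_modEq {S : Type*} [CommRing S] {l : ℕ} (hl : (l : S) = 0)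
    {n m : ℕ} (h : n ≡ m [MOD l]) : (n : S) = (m : S) := by
  have hn := Nat.div_add_mod n l
  have hm := Nat.div_add_mod m l
  have h' : n % l = m % l := h
  calc (n : S) = ((l * (n / l) + n % l : ℕ) : S) := by rw [hn]
    _ = (l : S) * (n / l : ℕ) + ((n % l : ℕ) : S) := by push_cast; ring
    _ = ((m % l : ℕ) : S) := by rw [hl, h']; ring
    _ = (l : S) * (m / l : ℕ) + ((m % l : ℕ) : S) := by rw [hl]; ring
    _ = ((l * (m / l) + m % l : ℕ) : S) := by push_cast; ring
    _ = (m : S) := by rw [hm]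

lemma qrec_truncEq_step {S : Type*} [CommRing S] {l : ℕ} (hl : (l : S) = 0)
    (b₁ b₂ b₃ b₄ : Polynomial S) {n m : ℕ} (hnm : n ≡ m [MOD l])
    (h0 : TruncEq l (qrec b₁ b₂ b₃ b₄ n) (qrec b₁ b₂ b₃ b₄ m))
    (h1 : TruncEq l (qrec b₁ b₂ b₃ b₄ (n + 1)) (qrec b₁ b₂ b₃ b₄ (m + 1))) :
    TruncEq l (qrec b₁ b₂ b₃ b₄ (n + 2)) (qrec b₁ b₂ b₃ b₄ (m + 2)) := by
  have hlp : ((l : ℕ) : Polynomial S) = 0 := by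
    rw [← Polynomial.C_eq_natCast, hl, map_zero]
  have hcast : ((n : ℕ) : Polynomial S) = ((m : ℕ) : Polynomial S) :=
    natCast_eq_of_modEq hlp hnm
  show TruncEq l
    ((b₁ + ((n : Polynomial S) + 1) * b₂) * qrec b₁ b₂ b₃ b₄ (n + 1)
        + b₃ * Polynomial.derivative (qrec b₁ b₂ b₃ b₄ (n + 1))
        + ((n : Polynomial S) + 1) * ((n : Polynomial S) + 12) * b₄ * qrec b₁ b₂ b₃ b₄ n)
    ((b₁ + ((m : Polynomial S) + 1) * b₂) * qrec b₁ b₂ b₃ b₄ (m + 1)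
        + b₃ * Polynomial.derivative (qrec b₁ b₂ b₃ b₄ (m + 1))
        + ((m : Polynomial S) + 1) * ((m : Polynomial S) + 12) * b₄ * qrec b₁ b₂ b₃ b₄ m)
  rw [hcast]
  exact ((TruncEq.mul_left _ h1).add (TruncEq.mul_left _ (h1.deriv hl))).add
    (TruncEq.mul_left _ h0)

/-- state of the truncated recursion -/
def qstate {S : Type*} [CommRing S] (l : ℕ) (b₁ b₂ b₃ b₄ : Polynomial S) (n : ℕ) :
    ZMod l × (Fin l → S) × (Fin l → S) :=
  ((n : ZMod l), fun i => (qrec b₁ b₂ b₃ b₄ n).coeff i,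
    fun i => (qrec b₁ b₂ b₃ b₄ (n + 1)).coeff i)

lemma qstate_step {S : Type*} [CommRing S] {l : ℕ} (hl : (l : S) = 0)
    (b₁ b₂ b₃ b₄ : Polynomial S) {n m : ℕ}
    (h : qstate l b₁ b₂ b₃ b₄ n = qstate l b₁ b₂ b₃ b₄ m) :
    qstate l b₁ b₂ b₃ b₄ (n + 1) = qstate l b₁ b₂ b₃ b₄ (m + 1) := by
  have h1 : ((n : ℕ) : ZMod l) = ((m : ℕ) : ZMod l) := congrArg Prod.fst h
  have h3 : TruncEq l (qrec b₁ b₂ b₃ b₄ (n + 1)) (qrec b₁ b₂ b₃ b₄ (m + 1)) := by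
    intro i hi
    exact congrFun (congrArg (fun v => v.2.2) h) ⟨i, hi⟩
  have h2 : TruncEq l (qrec b₁ b₂ b₃ b₄ n) (qrec b₁ b₂ b₃ b₄ m) := by
    intro i hi
    exact congrFun (congrArg (fun v => v.2.1) h) ⟨i, hi⟩
  have h4 := qrec_truncEq_step hl b₁ b₂ b₃ b₄
    ((ZMod.natCast_eq_natCast_iff _ _ _).mp h1) h2 h3
  refine Prod.ext ?_ (Prod.ext ?_ ?_)
  · show (((n + 1 : ℕ)) : ZMod l) = ((m + 1 : ℕ) : ZMod l)
    push_cast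
    rw [h1]
  · funext i
    exact h3 i i.2
  · funext i
    exact h4 i i.2


/-- Theorem 6.1 of the paper, eventual periodicity of `q_m(0)` mod `l 𝓞_K`. -/
theorem qrec_coeff_zero_eventually_periodic (K : Type*) [Field K] [NumberField K]
    (a₁ a₂ a₃ a₄ : Polynomial (NumberField.RingOfIntegers K)) (l : ℕ) (hl : 1 ≤ l) :
    ∃ α β : ℕ, 1 ≤ β ∧
      α + β ≤ l * (Nat.card (NumberField.RingOfIntegers K ⧸
        Ideal.span {(l : NumberField.RingOfIntegers K)})) ^ (2 * l) ∧
      ∀ m : ℕ, α ≤ m → (l : NumberField.RingOfIntegers K) ∣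
        ((qrec a₁ a₂ a₃ a₄ (m + β)).coeff 0 - (qrec a₁ a₂ a₃ a₄ m).coeff 0) := by
  classical
  set R := NumberField.RingOfIntegers K with hR
  set I : Ideal R := Ideal.span {(l : R)} with hIdef
  have hlR : (l : R) ≠ 0 := Nat.cast_ne_zero.mpr (by omega)
  haveI : Fintype (R ⧸ I) := @Fintype.ofFinite _ (Ideal.finiteQuotientOfFreeOfNeBot I
    (by rw [hIdef, Ne, Ideal.span_singleton_eq_bot]; exact hlR))
  haveI : NeZero l := ⟨by omega⟩
  set φπ : R →+* R ⧸ I := Ideal.Quotient.mk I with hφπ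
  have hl0 : (l : R ⧸ I) = 0 := by
    rw [← map_natCast φπ l]
    exact Ideal.Quotient.eq_zero_iff_mem.mpr (Ideal.mem_span_singleton_self _)
  set b₁ := a₁.map φπ
  set b₂ := a₂.map φπ
  set b₃ := a₃.map φπ
  set b₄ := a₄.map φπ
  -- mapping commutes with the recursion
  have hq : ∀ n, (qrec a₁ a₂ a₃ a₄ n).map φπ = qrec b₁ b₂ b₃ b₄ n := by
    intro n
    induction n using Nat.strong_induction_on with
    | _ n ih =>
      match n with
      | 0 => simp [qrec]
      | 1 => simp [qrec]; rfl
      | (n + 2) =>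
        show ((a₁ + ((n : Polynomial R) + 1) * a₂) * qrec a₁ a₂ a₃ a₄ (n + 1)
            + a₃ * Polynomial.derivative (qrec a₁ a₂ a₃ a₄ (n + 1))
            + ((n : Polynomial R) + 1) * ((n : Polynomial R) + 12) * a₄
              * qrec a₁ a₂ a₃ a₄ n).map φπ = _
        simp only [Polynomial.map_add, Polynomial.map_mul, ← Polynomial.derivative_map,
          Polynomial.map_natCast, Polynomial.map_one, Polynomial.map_ofNat,
          ih n (by omega), ih (n + 1) (by omega)]
        rfl
  set N := Nat.card (R ⧸ I) with hN
  set S := l * N ^ (2 * l) with hSdef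
  have hcard : Fintype.card (ZMod l × (Fin l → R ⧸ I) × (Fin l → R ⧸ I)) = S := by
    rw [← Nat.card_eq_fintype_card, Nat.card_prod, Nat.card_prod, Nat.card_zmod,
      Nat.card_fun]
    have hfl : Nat.card (Fin l) = l := by simp [Nat.card_eq_fintype_card]
    rw [hfl, hSdef, hN, two_mul, pow_add]
  obtain ⟨i, j, hne, hij⟩ := Fintype.exists_ne_map_eq_of_card_lt
    (fun k : Fin (S + 1) => qstate l b₁ b₂ b₃ b₄ k) (by rw [hcard, Fintype.card_fin]; omega)
  -- wlog i < j
  obtain ⟨i0, j0, hij0, hjle, hst⟩ : ∃ i0 j0 : ℕ, i0 < j0 ∧ j0 ≤ S ∧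
      qstate l b₁ b₂ b₃ b₄ i0 = qstate l b₁ b₂ b₃ b₄ j0 := by
    rcases (Fin.val_ne_of_ne hne).lt_or_gt with h | h
    · exact ⟨i, j, h, Nat.lt_succ_iff.mp j.2, hij⟩
    · exact ⟨j, i, h, Nat.lt_succ_iff.mp i.2, hij.symm⟩
  have mono : ∀ d, qstate l b₁ b₂ b₃ b₄ (i0 + d) = qstate l b₁ b₂ b₃ b₄ (j0 + d) := by
    intro d
    induction d with
    | zero => exact hst
    | succ d ihd =>
      rw [show i0 + (d + 1) = (i0 + d) + 1 by omega, show j0 + (d + 1) = (j0 + d) + 1 by omega]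
      exact qstate_step hl0 b₁ b₂ b₃ b₄ ihd
  refine ⟨i0, j0 - i0, by omega, by omega, ?_⟩
  intro m hm
  have h := mono (m - i0)
  rw [show i0 + (m - i0) = m by omega, show j0 + (m - i0) = m + (j0 - i0) by omega] at h
  have hcoeff : (qrec b₁ b₂ b₃ b₄ m).coeff 0 = (qrec b₁ b₂ b₃ b₄ (m + (j0 - i0))).coeff 0 :=
    congrFun (congrArg (fun v => v.2.1) h) ⟨0, by omega⟩
  rw [← hq, ← hq, Polynomial.coeff_map, Polynomial.coeff_map] at hcoeff
  have : (qrec a₁ a₂ a₃ a₄ (m + (j0 - i0))).coeff 0 - (qrec a₁ a₂ a₃ a₄ m).coeff 0 ∈ I :=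
    Ideal.Quotient.eq.mp hcoeff.symm
  rwa [hIdef, Ideal.mem_span_singleton] at this

end
end

section
/- Let K be a number field with ring of integers 𝓞_K, let a₁,a₂,a₃,a₄ ∈ 𝓞_K[t], let q_n ∈ 𝓞_K[t] be given by the recursion, and let l > 2 be a prime. Then there exist polynomials f₀, f₁, …, f_l ∈ 𝓞_K[t] (independent of n) such that for every n ∈ ℤ_{≥0}, q_{(n+1)l} ≡ Σ_{i=0}^{l} f_i · a₃^i · q_{nl}^{(i)} modulo the ideal (l, t^l) of 𝓞_K[t], where q^{(i)} denotes the i-th formal derivative. In particular the residues of q_{nl} modulo (l, t^l) satisfy a one-step linear recursion q̄_{(n+1)l} = Ψ(q̄_{nl}) for a fixed additive map Ψ, and consequently the sequence q_m(0) mod l𝓞_K is eventually periodic with pre-period plus period at most l·|𝓞_K/l𝓞_K|^{l}. -/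
noncomputable section

open Complex Real MeasureTheory

section QrecProofAux

open Polynomial Finset

variable {R : Type*} [CommRing R]

private lemma qrec_add_two (a₁ a₂ a₃ a₄ : Polynomial R) (n : ℕ) :
    qrec a₁ a₂ a₃ a₄ (n + 2) =
      (a₁ + ((n : Polynomial R) + 1) * a₂) * qrec a₁ a₂ a₃ a₄ (n + 1)
        + a₃ * Polynomial.derivative (qrec a₁ a₂ a₃ a₄ (n + 1))
        + ((n : Polynomial R) + 1) * ((n : Polynomial R) + 12) * a₄ * qrec a₁ a₂ a₃ a₄ n := by
  rw [qrec]

private lemma itd_zero (i : ℕ) : (fun p : Polynomial R => derivative p)^[i] (0 : Polynomial R) = 0 := by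
  induction i with
  | zero => rfl
  | succ i ih => rw [Function.iterate_succ_apply', ih]; simp

private lemma itd_add (i : ℕ) (p q : Polynomial R) :
    (fun p : Polynomial R => derivative p)^[i] (p + q)
      = (fun p : Polynomial R => derivative p)^[i] p
        + (fun p : Polynomial R => derivative p)^[i] q := by
  induction i with
  | zero => rfl
  | succ i ih =>
    rw [Function.iterate_succ_apply', Function.iterate_succ_apply',
      Function.iterate_succ_apply', ih]
    simp

private lemma itd_sub (i : ℕ) (p q : Polynomial R) :
    (fun p : Polynomial R => derivative p)^[i] (p - q)
      = (fun p : Polynomial R => derivative p)^[i] p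
        - (fun p : Polynomial R => derivative p)^[i] q := by
  induction i with
  | zero => rfl
  | succ i ih =>
    rw [Function.iterate_succ_apply', Function.iterate_succ_apply',
      Function.iterate_succ_apply', ih]
    simp

private lemma C_dvd_natmul (n l : ℕ) :
    C ((l : R)) ∣ ((n * l : ℕ) : Polynomial R) := by
  have h : ((n * l : ℕ) : Polynomial R) = ((n : ℕ) : Polynomial R) * C ((l : R)) := by
    push_cast [Polynomial.C_eq_natCast]
    ring
  rw [h]
  exact dvd_mul_left _ _

private lemma keyB (a₁ a₂ a₃ a₄ : Polynomial R) (l : ℕ) (hl : 0 < l) :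
    ∀ j : ℕ, ∃ g : ℕ → Polynomial R, (∀ i, j < i → g i = 0) ∧
      ∀ n : ℕ, C ((l : R)) ∣ (qrec a₁ a₂ a₃ a₄ (n * l + j)
          - ∑ i ∈ Finset.range (j + 1), g i * a₃ ^ i *
            ((fun p => Polynomial.derivative p)^[i] (qrec a₁ a₂ a₃ a₄ (n * l)))) := by
  intro j
  induction j using Nat.strong_induction_on with
  | _ j IH =>
  match j with
  | 0 =>
      refine ⟨fun i => if i = 0 then 1 else 0, fun i hi => if_neg (by omega), ?_⟩
      intro n
      simp
  | 1 =>
      refine ⟨fun i => if i = 0 then a₁ else if i = 1 then 1 else 0, ?_, ?_⟩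
      · intro i hi
        have h0 : i ≠ 0 := by omega
        have h1 : i ≠ 1 := by omega
        simp [h0, h1]
      · intro n
        have hsum : ∑ i ∈ Finset.range 2,
            (if i = 0 then a₁ else if i = 1 then 1 else 0) * a₃ ^ i *
              ((fun p => Polynomial.derivative p)^[i] (qrec a₁ a₂ a₃ a₄ (n * l)))
            = a₁ * qrec a₁ a₂ a₃ a₄ (n * l)
              + a₃ * derivative (qrec a₁ a₂ a₃ a₄ (n * l)) := by
          rw [Finset.sum_range_succ, Finset.sum_range_one]
          simp [Function.iterate_one]
        rw [hsum]
        rcases Nat.eq_zero_or_pos n with hn | hn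
        · subst hn
          simp [qrec]
        · have hpos : 0 < n * l := Nat.mul_pos hn hl
          obtain ⟨k, hk⟩ : ∃ k, n * l = k + 1 := ⟨n * l - 1, by omega⟩
          rw [show n * l + 1 = k + 2 by omega, hk, qrec_add_two]
          have hdvd : C ((l : R)) ∣ ((k : Polynomial R) + 1) := by
            have : ((k : Polynomial R) + 1) = ((n * l : ℕ) : Polynomial R) := by
              rw [hk]; push_cast; ring
            rw [this]; exact C_dvd_natmul n l
          have hident : (a₁ + ((k : Polynomial R) + 1) * a₂) * qrec a₁ a₂ a₃ a₄ (k + 1)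
                + a₃ * derivative (qrec a₁ a₂ a₃ a₄ (k + 1))
                + ((k : Polynomial R) + 1) * ((k : Polynomial R) + 12) * a₄ * qrec a₁ a₂ a₃ a₄ k
              - (a₁ * qrec a₁ a₂ a₃ a₄ (k + 1) + a₃ * derivative (qrec a₁ a₂ a₃ a₄ (k + 1)))
              = ((k : Polynomial R) + 1) * (a₂ * qrec a₁ a₂ a₃ a₄ (k + 1)
                  + ((k : Polynomial R) + 12) * a₄ * qrec a₁ a₂ a₃ a₄ k) := by ring
          rw [hident]
          exact hdvd.mul_right _
  | (j + 2) =>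
      obtain ⟨g1, hg1z, hg1⟩ := IH (j + 1) (by omega)
      obtain ⟨g0, hg0z, hg0⟩ := IH j (by omega)
      set g2 : ℕ → Polynomial R := fun i =>
        (a₁ + ((j : Polynomial R) + 1) * a₂) * g1 i + a₃ * derivative (g1 i)
          + (i : Polynomial R) * derivative a₃ * g1 i
          + (if i = 0 then 0 else g1 (i - 1))
          + ((j : Polynomial R) + 1) * ((j : Polynomial R) + 12) * a₄ * g0 i with hg2
      refine ⟨g2, ?_, ?_⟩
      · intro i hi
        have h0 : i ≠ 0 := by omega
        rw [hg2]
        simp only [h0, if_neg h0]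
        rw [hg1z i (by omega), hg0z i (by omega), hg1z (i - 1) (by omega)]
        simp
      · intro n
        set Q := qrec a₁ a₂ a₃ a₄ (n * l) with hQ
        set S1 := ∑ i ∈ Finset.range (j + 1 + 1), g1 i * a₃ ^ i *
          ((fun p => Polynomial.derivative p)^[i] Q) with hS1
        set S0 := ∑ i ∈ Finset.range (j + 1), g0 i * a₃ ^ i *
          ((fun p => Polynomial.derivative p)^[i] Q) with hS0
        have hpow : ∀ i : ℕ, a₃ * derivative (a₃ ^ i)
            = (i : Polynomial R) * derivative a₃ * a₃ ^ i := by
          intro i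
          cases i with
          | zero => simp
          | succ m =>
            rw [derivative_pow_succ, pow_succ]
            simp only [map_add, map_one, C_eq_natCast]
            push_cast
            ring
        have hDS1 : a₃ * derivative S1 = ∑ i ∈ Finset.range (j + 1 + 1),
            ((a₃ * derivative (g1 i) + (i : Polynomial R) * derivative a₃ * g1 i)
                * (a₃ ^ i * ((fun p => Polynomial.derivative p)^[i] Q))
              + g1 i * (a₃ ^ (i + 1) * ((fun p => Polynomial.derivative p)^[i + 1] Q))) := by
          rw [hS1, derivative_sum, Finset.mul_sum]
          refine Finset.sum_congr rfl fun i _ => ?_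
          rw [Function.iterate_succ_apply']
          have step : a₃ * derivative (g1 i * a₃ ^ i * ((fun p => Polynomial.derivative p)^[i] Q))
              = a₃ * derivative (g1 i) * a₃ ^ i * ((fun p => Polynomial.derivative p)^[i] Q)
                + g1 i * (a₃ * derivative (a₃ ^ i)) * ((fun p => Polynomial.derivative p)^[i] Q)
                + g1 i * a₃ ^ (i + 1) *
                    derivative ((fun p => Polynomial.derivative p)^[i] Q) := by
            simp only [derivative_mul]
            ring
          rw [step, hpow i]
          ring
        -- third sum reindex
        have h3 : ∑ i ∈ Finset.range (j + 2 + 1),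
              (if i = 0 then (0 : Polynomial R) else g1 (i - 1)) * a₃ ^ i *
                ((fun p => Polynomial.derivative p)^[i] Q)
            = ∑ i ∈ Finset.range (j + 1 + 1),
              g1 i * (a₃ ^ (i + 1) * ((fun p => Polynomial.derivative p)^[i + 1] Q)) := by
          rw [Finset.sum_range_succ']
          have hz0 : (if (0:ℕ) = 0 then (0 : Polynomial R) else g1 (0 - 1)) * a₃ ^ 0 *
              ((fun p => Polynomial.derivative p)^[0] Q) = 0 := by simp
          rw [hz0, add_zero]
          refine Finset.sum_congr rfl fun i _ => ?_
          rw [if_neg (Nat.succ_ne_zero i), Nat.add_sub_cancel]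
          ring
        have hG : ∑ i ∈ Finset.range (j + 2 + 1), g2 i * a₃ ^ i *
              ((fun p => Polynomial.derivative p)^[i] Q)
            = (a₁ + ((j : Polynomial R) + 1) * a₂) * S1 + a₃ * derivative S1
              + ((j : Polynomial R) + 1) * ((j : Polynomial R) + 12) * a₄ * S0 := by
          have expand : ∀ i ∈ Finset.range (j + 2 + 1), g2 i * a₃ ^ i *
                ((fun p => Polynomial.derivative p)^[i] Q)
              = (a₁ + ((j : Polynomial R) + 1) * a₂) *
                  (g1 i * a₃ ^ i * ((fun p => Polynomial.derivative p)^[i] Q))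
                + (a₃ * derivative (g1 i) + (i : Polynomial R) * derivative a₃ * g1 i)
                    * (a₃ ^ i * ((fun p => Polynomial.derivative p)^[i] Q))
                + (if i = 0 then (0 : Polynomial R) else g1 (i - 1)) * a₃ ^ i *
                    ((fun p => Polynomial.derivative p)^[i] Q)
                + ((j : Polynomial R) + 1) * ((j : Polynomial R) + 12) * a₄ *
                    (g0 i * a₃ ^ i * ((fun p => Polynomial.derivative p)^[i] Q)) := by
            intro i _
            rw [hg2]
            ring
          rw [Finset.sum_congr rfl expand, Finset.sum_add_distrib, Finset.sum_add_distrib,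
            Finset.sum_add_distrib, h3]
          have e1 : ∑ i ∈ Finset.range (j + 2 + 1), (a₁ + ((j : Polynomial R) + 1) * a₂) *
                (g1 i * a₃ ^ i * ((fun p => Polynomial.derivative p)^[i] Q))
              = (a₁ + ((j : Polynomial R) + 1) * a₂) * S1 := by
            rw [← Finset.mul_sum, hS1]
            congr 1
            rw [Finset.sum_range_succ, hg1z (j + 2) (by omega)]
            simp
          have e2 : ∑ i ∈ Finset.range (j + 2 + 1),
                (a₃ * derivative (g1 i) + (i : Polynomial R) * derivative a₃ * g1 i)
                  * (a₃ ^ i * ((fun p => Polynomial.derivative p)^[i] Q))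
              = ∑ i ∈ Finset.range (j + 1 + 1),
                (a₃ * derivative (g1 i) + (i : Polynomial R) * derivative a₃ * g1 i)
                  * (a₃ ^ i * ((fun p => Polynomial.derivative p)^[i] Q)) := by
            rw [Finset.sum_range_succ, hg1z (j + 2) (by omega)]
            simp
          have e4 : ∑ i ∈ Finset.range (j + 2 + 1),
                ((j : Polynomial R) + 1) * ((j : Polynomial R) + 12) * a₄ *
                  (g0 i * a₃ ^ i * ((fun p => Polynomial.derivative p)^[i] Q))
              = ((j : Polynomial R) + 1) * ((j : Polynomial R) + 12) * a₄ * S0 := by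
            rw [← Finset.mul_sum, hS0]
            congr 1
            rw [Finset.sum_range_succ, Finset.sum_range_succ, hg0z (j + 2) (by omega),
              hg0z (j + 1) (by omega)]
            simp
          rw [e1, e2, e4, hDS1, Finset.sum_add_distrib]
          ring
        rw [show n * l + (j + 2) = (n * l + j) + 2 by omega]
        rw [hG, qrec_add_two]
        have H1 : C ((l : R)) ∣ (qrec a₁ a₂ a₃ a₄ (n * l + j + 1) - S1) := by
          have := hg1 n
          rwa [show n * l + (j + 1) = n * l + j + 1 by omega, ← hQ, ← hS1] at this
        have H0 : C ((l : R)) ∣ (qrec a₁ a₂ a₃ a₄ (n * l + j) - S0) := by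
          have := hg0 n
          rwa [← hQ, ← hS0] at this
        obtain ⟨c1, hc1⟩ := H1
        obtain ⟨c0, hc0⟩ := H0
        have hcast1 : ((n * l + j : ℕ) : Polynomial R) + 1 - (((j : Polynomial R)) + 1)
            = ((n * l : ℕ) : Polynomial R) := by push_cast; ring
        have hcast2 : (((n * l + j : ℕ) : Polynomial R) + 1) * (((n * l + j : ℕ) : Polynomial R) + 12)
              - ((j : Polynomial R) + 1) * ((j : Polynomial R) + 12)
            = ((n * l : ℕ) : Polynomial R) *
                (((n * l : ℕ) : Polynomial R) + 2 * (j : Polynomial R) + 13) := by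
          push_cast; ring
        have hident : (a₁ + (((n * l + j : ℕ) : Polynomial R) + 1) * a₂) *
                qrec a₁ a₂ a₃ a₄ (n * l + j + 1)
              + a₃ * derivative (qrec a₁ a₂ a₃ a₄ (n * l + j + 1))
              + (((n * l + j : ℕ) : Polynomial R) + 1) * (((n * l + j : ℕ) : Polynomial R) + 12)
                  * a₄ * qrec a₁ a₂ a₃ a₄ (n * l + j)
            - ((a₁ + ((j : Polynomial R) + 1) * a₂) * S1 + a₃ * derivative S1
                + ((j : Polynomial R) + 1) * ((j : Polynomial R) + 12) * a₄ * S0)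
            = (a₁ + ((j : Polynomial R) + 1) * a₂) * (qrec a₁ a₂ a₃ a₄ (n * l + j + 1) - S1)
              + a₃ * (derivative (qrec a₁ a₂ a₃ a₄ (n * l + j + 1)) - derivative S1)
              + ((j : Polynomial R) + 1) * ((j : Polynomial R) + 12) * a₄ *
                  (qrec a₁ a₂ a₃ a₄ (n * l + j) - S0)
              + (((n * l + j : ℕ) : Polynomial R) + 1 - ((j : Polynomial R) + 1)) * a₂ *
                  qrec a₁ a₂ a₃ a₄ (n * l + j + 1)
              + ((((n * l + j : ℕ) : Polynomial R) + 1) * (((n * l + j : ℕ) : Polynomial R) + 12)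
                  - ((j : Polynomial R) + 1) * ((j : Polynomial R) + 12)) * a₄ *
                  qrec a₁ a₂ a₃ a₄ (n * l + j) := by ring
        rw [hident, hcast1, hcast2]
        have d1 : C ((l : R)) ∣ (a₁ + ((j : Polynomial R) + 1) * a₂) *
            (qrec a₁ a₂ a₃ a₄ (n * l + j + 1) - S1) := (Dvd.intro c1 hc1.symm).mul_left _
        have d2 : C ((l : R)) ∣ a₃ * (derivative (qrec a₁ a₂ a₃ a₄ (n * l + j + 1))
            - derivative S1) := by
          have : derivative (qrec a₁ a₂ a₃ a₄ (n * l + j + 1)) - derivative S1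
              = C ((l : R)) * derivative c1 := by
            rw [← derivative_sub, hc1, derivative_mul, derivative_C, zero_mul, zero_add]
          rw [this]
          exact (Dvd.intro _ rfl).mul_left _
        have d3 : C ((l : R)) ∣ ((j : Polynomial R) + 1) * ((j : Polynomial R) + 12) * a₄ *
            (qrec a₁ a₂ a₃ a₄ (n * l + j) - S0) := (Dvd.intro c0 hc0.symm).mul_left _
        have d4 : C ((l : R)) ∣ ((n * l : ℕ) : Polynomial R) * a₂ *
            qrec a₁ a₂ a₃ a₄ (n * l + j + 1) := ((C_dvd_natmul n l).mul_right _).mul_right _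
        have d5 : C ((l : R)) ∣ ((n * l : ℕ) : Polynomial R) *
              (((n * l : ℕ) : Polynomial R) + 2 * (j : Polynomial R) + 13) * a₄ *
              qrec a₁ a₂ a₃ a₄ (n * l + j) :=
          (((C_dvd_natmul n l).mul_right _).mul_right _).mul_right _
        exact dvd_add (dvd_add (dvd_add (dvd_add d1 d2) d3) d4) d5

private lemma deriv_mem_I (l : ℕ) {p : Polynomial R}
    (hp : p ∈ Ideal.span ({C ((l : ℕ) : R), X ^ l} : Set (Polynomial R))) :
    derivative p ∈ Ideal.span ({C ((l : ℕ) : R), X ^ l} : Set (Polynomial R)) := by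
  rw [Ideal.mem_span_pair] at hp ⊢
  obtain ⟨u, v, rfl⟩ := hp
  refine ⟨derivative u + v * X ^ (l - 1), derivative v, ?_⟩
  simp only [derivative_add, derivative_mul, derivative_C, derivative_X_pow, mul_zero, add_zero]
  ring

private lemma hitd_mem_I (l : ℕ) (i : ℕ) {p : Polynomial R}
    (hp : p ∈ Ideal.span ({C ((l : ℕ) : R), X ^ l} : Set (Polynomial R))) :
    (fun p : Polynomial R => derivative p)^[i] p
      ∈ Ideal.span ({C ((l : ℕ) : R), X ^ l} : Set (Polynomial R)) := by
  induction i generalizing p with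
  | zero => exact hp
  | succ i ih =>
    rw [Function.iterate_succ_apply]
    exact ih (deriv_mem_I l hp)

private lemma mem_I_of_coeff [Nontrivial R] (l : ℕ) (hl : 0 < l) (p : Polynomial R)
    (h : ∀ i : ℕ, i < l → ((l : ℕ) : R) ∣ p.coeff i) :
    p ∈ Ideal.span ({C ((l : ℕ) : R), X ^ l} : Set (Polynomial R)) := by
  have hmon : (X ^ l : Polynomial R).Monic := monic_X_pow l
  have hdecomp := modByMonic_add_div p (X ^ l)
  have hpm : C ((l : ℕ) : R) ∣ p %ₘ X ^ l := by
    rw [Polynomial.C_dvd_iff_dvd_coeff]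
    intro i
    by_cases hi : i < l
    · have hco : (p %ₘ X ^ l).coeff i = p.coeff i := by
        conv_rhs => rw [← hdecomp]
        rw [Polynomial.coeff_add, mul_comm (X ^ l : Polynomial R) (p /ₘ X ^ l),
          Polynomial.coeff_mul_X_pow', if_neg (by omega : ¬ l ≤ i), add_zero]
      rw [hco]
      exact h i hi
    · have hz : (p %ₘ X ^ l).coeff i = 0 := by
        refine Polynomial.coeff_eq_zero_of_degree_lt
          (lt_of_lt_of_le (degree_modByMonic_lt p hmon) ?_)
        rw [degree_X_pow]
        exact_mod_cast Nat.le_of_not_lt hi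
      rw [hz]
      exact dvd_zero _
  obtain ⟨u, hu⟩ := hpm
  rw [Ideal.mem_span_pair]
  exact ⟨u, p /ₘ X ^ l, by linear_combination hdecomp - hu⟩

private lemma dvd_coeff_zero_of_mem_I (l : ℕ) (hl : 0 < l) (p : Polynomial R)
    (h : p ∈ Ideal.span ({C ((l : ℕ) : R), X ^ l} : Set (Polynomial R))) :
    ((l : ℕ) : R) ∣ p.coeff 0 := by
  rw [Ideal.mem_span_pair] at h
  obtain ⟨u, v, rfl⟩ := h
  rw [Polynomial.coeff_add, Polynomial.mul_coeff_zero, Polynomial.mul_coeff_zero,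
    Polynomial.coeff_C, Polynomial.coeff_X_pow]
  rw [if_pos rfl, if_neg (by omega : ¬ (0 : ℕ) = l), mul_zero, add_zero]
  exact dvd_mul_left _ _

private lemma exists_descend {S : Type*} [CommRing S] (I : Ideal S) (F : S →+ S)
    (hF : ∀ x ∈ I, F x ∈ I) :
    ∃ Fbar : (S ⧸ I) →+ (S ⧸ I), ∀ x : S,
      Fbar (Ideal.Quotient.mk I x) = Ideal.Quotient.mk I (F x) := by
  have key : ∀ x y : S, Ideal.Quotient.mk I x = Ideal.Quotient.mk I y →
      Ideal.Quotient.mk I (F x) = Ideal.Quotient.mk I (F y) := by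
    intro x y h
    rw [Ideal.Quotient.eq] at h ⊢
    have := hF _ h
    rwa [map_sub] at this
  choose sec hsec using Ideal.Quotient.mk_surjective (I := I)
  refine ⟨AddMonoidHom.mk' (fun y => Ideal.Quotient.mk I (F (sec y))) ?_, ?_⟩
  · intro a b
    show Ideal.Quotient.mk I (F (sec (a + b)))
      = Ideal.Quotient.mk I (F (sec a)) + Ideal.Quotient.mk I (F (sec b))
    have hab : Ideal.Quotient.mk I (sec (a + b)) = Ideal.Quotient.mk I (sec a + sec b) := by
      rw [map_add, hsec, hsec, hsec]
    have h2 := key _ _ hab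
    rw [map_add F] at h2
    simpa [map_add] using h2
  · intro x
    exact key _ _ (hsec (Ideal.Quotient.mk I x))

end QrecProofAux

/-- the one-step recursion for the subsequence `q_{nl}` modulo `(l, t^l)`,
and the resulting bound on pre-period plus period. -/
theorem qrec_one_step_recursion_mod (K : Type*) [Field K] [NumberField K]
    (a₁ a₂ a₃ a₄ : Polynomial (NumberField.RingOfIntegers K))
    (l : ℕ) (hl : l.Prime) (hl2 : 2 < l) :
    (∃ f : ℕ → Polynomial (NumberField.RingOfIntegers K), ∀ n : ℕ,
        qrec a₁ a₂ a₃ a₄ ((n + 1) * l) -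
          ∑ i ∈ Finset.range (l + 1), f i * a₃ ^ i *
            ((fun p => Polynomial.derivative p)^[i] (qrec a₁ a₂ a₃ a₄ (n * l)))
          ∈ Ideal.span ({Polynomial.C (l : NumberField.RingOfIntegers K), Polynomial.X ^ l}
              : Set (Polynomial (NumberField.RingOfIntegers K)))) ∧
    (∃ Ψ : (Polynomial (NumberField.RingOfIntegers K) ⧸
          Ideal.span ({Polynomial.C (l : NumberField.RingOfIntegers K), Polynomial.X ^ l}
            : Set (Polynomial (NumberField.RingOfIntegers K)))) →+
        (Polynomial (NumberField.RingOfIntegers K) ⧸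
          Ideal.span ({Polynomial.C (l : NumberField.RingOfIntegers K), Polynomial.X ^ l}
            : Set (Polynomial (NumberField.RingOfIntegers K)))),
      ∀ n : ℕ,
        Ideal.Quotient.mk
            (Ideal.span ({Polynomial.C (l : NumberField.RingOfIntegers K), Polynomial.X ^ l}
              : Set (Polynomial (NumberField.RingOfIntegers K))))
            (qrec a₁ a₂ a₃ a₄ ((n + 1) * l)) =
          Ψ (Ideal.Quotient.mk
            (Ideal.span ({Polynomial.C (l : NumberField.RingOfIntegers K), Polynomial.X ^ l}
              : Set (Polynomial (NumberField.RingOfIntegers K))))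
            (qrec a₁ a₂ a₃ a₄ (n * l)))) ∧
    ∃ α β : ℕ, 1 ≤ β ∧
      α + β ≤ l * (Nat.card (NumberField.RingOfIntegers K ⧸
        Ideal.span {(l : NumberField.RingOfIntegers K)})) ^ l ∧
      ∀ m : ℕ, α ≤ m → (l : NumberField.RingOfIntegers K) ∣
        ((qrec a₁ a₂ a₃ a₄ (m + β)).coeff 0 - (qrec a₁ a₂ a₃ a₄ m).coeff 0) := by
  classical
  set R := NumberField.RingOfIntegers K with hR
  have hl0 : 0 < l := hl.pos
  obtain ⟨f, hfz, hf⟩ := keyB a₁ a₂ a₃ a₄ l hl0 l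
  set I : Ideal (Polynomial R) :=
    Ideal.span ({Polynomial.C (l : R), Polynomial.X ^ l} : Set (Polynomial R)) with hI
  have hCl : ∀ p : Polynomial R, Polynomial.C ((l : ℕ) : R) ∣ p → p ∈ I := by
    rintro p ⟨c, hc⟩
    exact Ideal.mem_span_pair.mpr ⟨c, 0, by rw [hc]; ring⟩
  have part1core : ∀ n : ℕ, qrec a₁ a₂ a₃ a₄ ((n + 1) * l) -
      ∑ i ∈ Finset.range (l + 1), f i * a₃ ^ i *
        ((fun p => Polynomial.derivative p)^[i] (qrec a₁ a₂ a₃ a₄ (n * l))) ∈ I := by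
    intro n
    have h := hf n
    rw [show n * l + l = (n + 1) * l by ring] at h
    exact hCl _ h
  -- the additive map Φ
  have hitd : ∀ (i : ℕ) (p : Polynomial R), p ∈ I →
      (fun p : Polynomial R => Polynomial.derivative p)^[i] p ∈ I :=
    fun i p hp => hitd_mem_I l i hp
  have Φadd : ∀ p q : Polynomial R,
      (∑ i ∈ Finset.range (l + 1), f i * a₃ ^ i *
        ((fun p => Polynomial.derivative p)^[i] (p + q)))
      = (∑ i ∈ Finset.range (l + 1), f i * a₃ ^ i *
          ((fun p => Polynomial.derivative p)^[i] p))
        + (∑ i ∈ Finset.range (l + 1), f i * a₃ ^ i *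
          ((fun p => Polynomial.derivative p)^[i] q)) := by
    intro p q
    rw [← Finset.sum_add_distrib]
    exact Finset.sum_congr rfl fun i _ => by rw [itd_add]; ring
  set Φ : Polynomial R →+ Polynomial R :=
    AddMonoidHom.mk' (fun p => ∑ i ∈ Finset.range (l + 1), f i * a₃ ^ i *
      ((fun p => Polynomial.derivative p)^[i] p)) Φadd with hΦ
  have hΦI : ∀ p ∈ I, Φ p ∈ I := by
    intro p hp
    show (∑ i ∈ Finset.range (l + 1), f i * a₃ ^ i *
      ((fun p => Polynomial.derivative p)^[i] p)) ∈ I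
    exact Ideal.sum_mem _ fun i _ => Ideal.mul_mem_left _ _ (hitd i p hp)
  obtain ⟨Ψ, hΨ⟩ := exists_descend I Φ hΦI
  have part2 : ∀ n : ℕ,
      Ideal.Quotient.mk I (qrec a₁ a₂ a₃ a₄ ((n + 1) * l)) =
        Ψ (Ideal.Quotient.mk I (qrec a₁ a₂ a₃ a₄ (n * l))) := by
    intro n
    rw [hΨ, Ideal.Quotient.eq]
    show qrec a₁ a₂ a₃ a₄ ((n + 1) * l) - (∑ i ∈ Finset.range (l + 1), f i * a₃ ^ i *
      ((fun p => Polynomial.derivative p)^[i] (qrec a₁ a₂ a₃ a₄ (n * l)))) ∈ I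
    exact part1core n
  refine ⟨⟨f, part1core⟩, ⟨Ψ, part2⟩, ?_⟩
  -- part 3
  haveI hfin : Finite (R ⧸ Ideal.span {(l : R)}) := by
    refine (Ideal.absNorm_ne_zero_iff _).mp ?_
    rw [Ideal.absNorm_span_singleton]
    simpa only [Ne, Int.natAbs_eq_zero, Algebra.norm_eq_zero_iff, Nat.cast_eq_zero] using hl0.ne'
  set N := Nat.card (R ⧸ Ideal.span {(l : R)}) with hN
  set Q0 := R ⧸ Ideal.span {(l : R)} with hQ0
  have hfl : Nat.card (Fin l) = l := by
    rw [Nat.card_eq_fintype_card, Fintype.card_fin]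
  have hcard : Nat.card (Fin l → Q0) = N ^ l := by
    rw [Nat.card_fun, hfl]
  set F : Fin (N ^ l + 1) → (Fin l → Q0) := fun n i =>
    Ideal.Quotient.mk _ ((qrec a₁ a₂ a₃ a₄ ((n : ℕ) * l)).coeff (i : ℕ)) with hF
  have hninj : ¬ Function.Injective F := by
    intro hinj
    have h1 := Nat.card_le_card_of_injective F hinj
    rw [hcard] at h1
    simp only [Nat.card_eq_fintype_card, Fintype.card_fin] at h1
    omega
  obtain ⟨x, y, hFxy, hxyne⟩ := Function.not_injective_iff.mp hninj
  obtain ⟨n1, n2, hlt, hle, hsame⟩ : ∃ n1 n2 : ℕ, n1 < n2 ∧ n2 ≤ N ^ l ∧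
      ∀ i : ℕ, i < l → ((qrec a₁ a₂ a₃ a₄ (n2 * l)).coeff i
        - (qrec a₁ a₂ a₃ a₄ (n1 * l)).coeff i) ∈ Ideal.span {(l : R)} := by
    have hvalne : (x : ℕ) ≠ (y : ℕ) := fun he => hxyne (Fin.ext he)
    rcases Nat.lt_or_ge (x : ℕ) (y : ℕ) with h | h
    · refine ⟨x, y, h, y.is_le, fun i hi => ?_⟩
      have hc := congrFun hFxy ⟨i, hi⟩
      simp only [hF] at hc
      exact Ideal.Quotient.eq.mp hc.symm
    · have h' : (y : ℕ) < (x : ℕ) := lt_of_le_of_ne h (Ne.symm hvalne)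
      refine ⟨y, x, h', x.is_le, fun i hi => ?_⟩
      have hc := congrFun hFxy ⟨i, hi⟩
      simp only [hF] at hc
      exact Ideal.Quotient.eq.mp hc
  have hmem21 : qrec a₁ a₂ a₃ a₄ (n2 * l) - qrec a₁ a₂ a₃ a₄ (n1 * l) ∈ I := by
    apply mem_I_of_coeff l hl0
    intro i hi
    rw [Polynomial.coeff_sub]
    have h := hsame i hi
    rwa [Ideal.mem_span_singleton] at h
  have hshift : ∀ k : ℕ,
      Ideal.Quotient.mk I (qrec a₁ a₂ a₃ a₄ ((n1 + k) * l)) =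
        Ideal.Quotient.mk I (qrec a₁ a₂ a₃ a₄ ((n2 + k) * l)) := by
    intro k
    induction k with
    | zero =>
      simp only [Nat.add_zero]
      rw [Ideal.Quotient.eq]
      simpa using I.neg_mem hmem21
    | succ k ih =>
      rw [show (n1 + (k + 1)) * l = ((n1 + k) + 1) * l by ring,
        show (n2 + (k + 1)) * l = ((n2 + k) + 1) * l by ring, part2, part2, ih]
  refine ⟨n1 * l, (n2 - n1) * l, ?_, ?_, ?_⟩
  · exact Nat.mul_pos (by omega) hl0
  · calc n1 * l + (n2 - n1) * l = n2 * l := by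
          rw [← Nat.add_mul, show n1 + (n2 - n1) = n2 by omega]
      _ ≤ N ^ l * l := Nat.mul_le_mul_right _ hle
      _ = l * N ^ l := Nat.mul_comm _ _
  · intro m hm
    set d := n2 - n1 with hd
    set n := m / l with hn
    set jj := m % l with hj
    have hmeq : m = n * l + jj := by
      rw [hn, hj, Nat.mul_comm (m / l) l]
      exact (Nat.div_add_mod m l).symm
    have hjl : jj < l := Nat.mod_lt _ hl0
    have hn1n : n1 ≤ n := (Nat.le_div_iff_mul_le hl0).mpr hm
    obtain ⟨g, hgz, hg⟩ := keyB a₁ a₂ a₃ a₄ l hl0 jj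
    have hquot : Ideal.Quotient.mk I (qrec a₁ a₂ a₃ a₄ (n * l)) =
        Ideal.Quotient.mk I (qrec a₁ a₂ a₃ a₄ ((n + d) * l)) := by
      have h := hshift (n - n1)
      rwa [show n1 + (n - n1) = n by omega, show n2 + (n - n1) = n + d by omega] at h
    have hdiffI : qrec a₁ a₂ a₃ a₄ ((n + d) * l) - qrec a₁ a₂ a₃ a₄ (n * l) ∈ I := by
      have h := Ideal.Quotient.eq.mp hquot
      simpa using I.neg_mem h
    obtain ⟨cA, hcA⟩ := hg (n + d)
    obtain ⟨cB, hcB⟩ := hg n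
    have hsumI : (∑ i ∈ Finset.range (jj + 1), g i * a₃ ^ i *
          ((fun p => Polynomial.derivative p)^[i] (qrec a₁ a₂ a₃ a₄ ((n + d) * l))))
        - (∑ i ∈ Finset.range (jj + 1), g i * a₃ ^ i *
          ((fun p => Polynomial.derivative p)^[i] (qrec a₁ a₂ a₃ a₄ (n * l)))) ∈ I := by
      rw [← Finset.sum_sub_distrib]
      refine Ideal.sum_mem _ fun i _ => ?_
      have he : g i * a₃ ^ i *
            ((fun p => Polynomial.derivative p)^[i] (qrec a₁ a₂ a₃ a₄ ((n + d) * l)))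
          - g i * a₃ ^ i *
            ((fun p => Polynomial.derivative p)^[i] (qrec a₁ a₂ a₃ a₄ (n * l)))
          = g i * a₃ ^ i * ((fun p => Polynomial.derivative p)^[i]
              (qrec a₁ a₂ a₃ a₄ ((n + d) * l) - qrec a₁ a₂ a₃ a₄ (n * l))) := by
        rw [itd_sub]
        ring
      rw [he]
      exact Ideal.mul_mem_left _ _ (hitd i _ hdiffI)
    have hfinal : qrec a₁ a₂ a₃ a₄ (m + d * l) - qrec a₁ a₂ a₃ a₄ m ∈ I := by
      have e1 : m + d * l = (n + d) * l + jj := by rw [hmeq]; ring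
      have e2 : qrec a₁ a₂ a₃ a₄ m = qrec a₁ a₂ a₃ a₄ (n * l + jj) := by rw [← hmeq]
      rw [e1, e2]
      have decomp : qrec a₁ a₂ a₃ a₄ ((n + d) * l + jj) - qrec a₁ a₂ a₃ a₄ (n * l + jj)
          = (qrec a₁ a₂ a₃ a₄ ((n + d) * l + jj)
              - ∑ i ∈ Finset.range (jj + 1), g i * a₃ ^ i *
                ((fun p => Polynomial.derivative p)^[i] (qrec a₁ a₂ a₃ a₄ ((n + d) * l))))
            - (qrec a₁ a₂ a₃ a₄ (n * l + jj)
              - ∑ i ∈ Finset.range (jj + 1), g i * a₃ ^ i *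
                ((fun p => Polynomial.derivative p)^[i] (qrec a₁ a₂ a₃ a₄ (n * l))))
            + ((∑ i ∈ Finset.range (jj + 1), g i * a₃ ^ i *
                ((fun p => Polynomial.derivative p)^[i] (qrec a₁ a₂ a₃ a₄ ((n + d) * l))))
              - (∑ i ∈ Finset.range (jj + 1), g i * a₃ ^ i *
                ((fun p => Polynomial.derivative p)^[i] (qrec a₁ a₂ a₃ a₄ (n * l))))) := by
        ring
      rw [decomp]
      exact Ideal.add_mem _
        (Ideal.sub_mem _ (hCl _ ⟨cA, hcA⟩) (hCl _ ⟨cB, hcB⟩)) hsumI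
    have h0 := dvd_coeff_zero_of_mem_I l hl0 _ hfinal
    rwa [Polynomial.coeff_sub] at h0

end
end

section
/- Let K be a number field with ring of integers 𝓞_K, let a₁,a₂,a₃,a₄ ∈ 𝓞_K[t], let q_n ∈ 𝓞_K[t] be given by the recursion, and let l > 2 be a prime. Suppose there are integers α ≥ 0 and β ≥ 1 with l ∤ β such that q_{n+β} ≡ q_n modulo the ideal (l, t^l) of 𝓞_K[t] for all n ≥ α. Then a₂(t)·q_n(t) ≡ 0 (mod (l, t^l)) and a₄(t)·q_n(t) ≡ 0 (mod (l, t^l)) for all n > α. -/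
noncomputable section

open Complex Real MeasureTheory

private lemma deriv_mem_span {R : Type*} [CommRing R] {l : ℕ} {p : Polynomial R}
    (hp : p ∈ Ideal.span ({Polynomial.C (l : R), Polynomial.X ^ l} : Set (Polynomial R))) :
    Polynomial.derivative p ∈
      Ideal.span ({Polynomial.C (l : R), Polynomial.X ^ l} : Set (Polynomial R)) := by
  rw [Ideal.mem_span_pair] at hp ⊢
  obtain ⟨u, v, rfl⟩ := hp
  refine ⟨Polynomial.derivative u + v * Polynomial.X ^ (l - 1), Polynomial.derivative v, ?_⟩
  simp only [Polynomial.derivative_add, Polynomial.derivative_mul, Polynomial.derivative_C,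
    Polynomial.derivative_X_pow, mul_zero, add_zero]
  ring

private lemma cancel_of_coprime {R : Type*} [CommRing R] {l c : ℕ} (hl : l.Prime)
    (hc : ¬ l ∣ c) {p : Polynomial R}
    (h : (c : Polynomial R) * p ∈
      Ideal.span ({Polynomial.C (l : R), Polynomial.X ^ l} : Set (Polynomial R))) :
    p ∈ Ideal.span ({Polynomial.C (l : R), Polynomial.X ^ l} : Set (Polynomial R)) := by
  have hcop : IsCoprime (l : ℤ) (c : ℤ) := by
    rw [Int.isCoprime_iff_gcd_eq_one, Int.gcd_natCast_natCast]
    exact hl.coprime_iff_not_dvd.mpr hc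
  obtain ⟨u, v, huv⟩ := hcop
  have h1 : ((u * l + v * c : ℤ) : Polynomial R) = 1 := by rw [huv]; simp
  push_cast at h1
  have key : p = (u : Polynomial R) * (Polynomial.C (l : R) * p)
      + (v : Polynomial R) * ((c : Polynomial R) * p) := by
    have hC : Polynomial.C ((l : ℕ) : R) = ((l : ℕ) : Polynomial R) := by
      simp
    calc p = ((u : Polynomial R) * (l : Polynomial R)
          + (v : Polynomial R) * (c : Polynomial R)) * p := by rw [h1, one_mul]
      _ = _ := by rw [hC]; ring
  rw [key]
  exact add_mem
    (Ideal.mul_mem_left _ _ (Ideal.mul_mem_right _ _ (Ideal.subset_span (Set.mem_insert _ _))))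
    (Ideal.mul_mem_left _ _ h)

private lemma qrec_step {R : Type*} [CommRing R] (a₁ a₂ a₃ a₄ : Polynomial R) {l : ℕ} (k s : ℕ)
    (h0 : qrec a₁ a₂ a₃ a₄ (k + s) - qrec a₁ a₂ a₃ a₄ k ∈
      Ideal.span ({Polynomial.C (l : R), Polynomial.X ^ l} : Set (Polynomial R)))
    (h1 : qrec a₁ a₂ a₃ a₄ (k + s + 1) - qrec a₁ a₂ a₃ a₄ (k + 1) ∈
      Ideal.span ({Polynomial.C (l : R), Polynomial.X ^ l} : Set (Polynomial R)))
    (h2 : qrec a₁ a₂ a₃ a₄ (k + s + 2) - qrec a₁ a₂ a₃ a₄ (k + 2) ∈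
      Ideal.span ({Polynomial.C (l : R), Polynomial.X ^ l} : Set (Polynomial R))) :
    (s : Polynomial R) * (a₂ * qrec a₁ a₂ a₃ a₄ (k + 1))
      + (s : Polynomial R) * (2 * (k : Polynomial R) + 13 + (s : Polynomial R))
        * (a₄ * qrec a₁ a₂ a₃ a₄ k) ∈
      Ideal.span ({Polynomial.C (l : R), Polynomial.X ^ l} : Set (Polynomial R)) := by
  set I := Ideal.span ({Polynomial.C (l : R), Polynomial.X ^ l} : Set (Polynomial R)) with hI
  have h1' : Polynomial.derivative (qrec a₁ a₂ a₃ a₄ (k + s + 1))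
      - Polynomial.derivative (qrec a₁ a₂ a₃ a₄ (k + 1)) ∈ I := by
    have := deriv_mem_span (l := l) h1
    rwa [Polynomial.derivative_sub] at this
  have key : (s : Polynomial R) * (a₂ * qrec a₁ a₂ a₃ a₄ (k + 1))
      + (s : Polynomial R) * (2 * (k : Polynomial R) + 13 + (s : Polynomial R))
        * (a₄ * qrec a₁ a₂ a₃ a₄ k)
      = (qrec a₁ a₂ a₃ a₄ (k + s + 2) - qrec a₁ a₂ a₃ a₄ (k + 2))
        - (a₁ + ((k : Polynomial R) + (s : Polynomial R) + 1) * a₂)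
          * (qrec a₁ a₂ a₃ a₄ (k + s + 1) - qrec a₁ a₂ a₃ a₄ (k + 1))
        - a₃ * (Polynomial.derivative (qrec a₁ a₂ a₃ a₄ (k + s + 1))
            - Polynomial.derivative (qrec a₁ a₂ a₃ a₄ (k + 1)))
        - ((k : Polynomial R) + (s : Polynomial R) + 1)
          * ((k : Polynomial R) + (s : Polynomial R) + 12) * a₄
          * (qrec a₁ a₂ a₃ a₄ (k + s) - qrec a₁ a₂ a₃ a₄ k) := by
    simp only [qrec]
    push_cast
    ring
  rw [key]
  exact sub_mem (sub_mem (sub_mem h2 (Ideal.mul_mem_left _ _ h1))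
    (Ideal.mul_mem_left _ _ h1')) (Ideal.mul_mem_left _ _ h0)

/-- Lemma 6.8 of the paper. -/
theorem qrec_mul_mem_of_periodic (K : Type*) [Field K] [NumberField K]
    (a₁ a₂ a₃ a₄ : Polynomial (NumberField.RingOfIntegers K))
    (l : ℕ) (hl : l.Prime) (hl2 : 2 < l) (α β : ℕ) (hβ : 1 ≤ β) (hlβ : ¬ l ∣ β)
    (hper : ∀ n : ℕ, α ≤ n →
      qrec a₁ a₂ a₃ a₄ (n + β) - qrec a₁ a₂ a₃ a₄ n ∈
        Ideal.span ({Polynomial.C (l : NumberField.RingOfIntegers K), Polynomial.X ^ l}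
          : Set (Polynomial (NumberField.RingOfIntegers K)))) :
    ∀ n : ℕ, α < n →
      a₂ * qrec a₁ a₂ a₃ a₄ n ∈
        Ideal.span ({Polynomial.C (l : NumberField.RingOfIntegers K), Polynomial.X ^ l}
          : Set (Polynomial (NumberField.RingOfIntegers K))) ∧
      a₄ * qrec a₁ a₂ a₃ a₄ n ∈
        Ideal.span ({Polynomial.C (l : NumberField.RingOfIntegers K), Polynomial.X ^ l}
          : Set (Polynomial (NumberField.RingOfIntegers K))) := by
  set R := NumberField.RingOfIntegers K
  set I := Ideal.span ({Polynomial.C (l : R), Polynomial.X ^ l} : Set (Polynomial R)) with hI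
  set q := qrec a₁ a₂ a₃ a₄ with hq
  -- periodicity with period 2β
  have hper2 : ∀ n : ℕ, α ≤ n → q (n + 2 * β) - q n ∈ I := by
    intro n hn
    have hb := hper (n + β) (le_trans hn (Nat.le_add_right _ _))
    have ha := hper n hn
    have hmem : (q (n + β + β) - q (n + β)) + (q (n + β) - q n) ∈ I := add_mem hb ha
    rwa [sub_add_sub_cancel, show n + β + β = n + 2 * β from by ring] at hmem
  have hdvd2 : ¬ l ∣ 2 * β ^ 2 := by
    intro h
    rcases (Nat.Prime.dvd_mul hl).mp h with h | h
    · exact absurd (Nat.le_of_dvd two_pos h) (by omega)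
    · exact hlβ (hl.dvd_of_dvd_pow h)
  -- main claim
  have main : ∀ k : ℕ, α ≤ k → a₄ * q k ∈ I ∧ a₂ * q (k + 1) ∈ I := by
    intro k hk
    have hp0 : q (k + β) - q k ∈ I := hper k hk
    have hp1 : q (k + β + 1) - q (k + 1) ∈ I := by
      have := hper (k + 1) (by omega)
      rwa [show k + 1 + β = k + β + 1 from by ring] at this
    have hp2 : q (k + β + 2) - q (k + 2) ∈ I := by
      have := hper (k + 2) (by omega)
      rwa [show k + 2 + β = k + β + 2 from by ring] at this
    have hq0 : q (k + 2 * β) - q k ∈ I := hper2 k hk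
    have hq1 : q (k + 2 * β + 1) - q (k + 1) ∈ I := by
      have := hper2 (k + 1) (by omega)
      rwa [show k + 1 + 2 * β = k + 2 * β + 1 from by ring] at this
    have hq2 : q (k + 2 * β + 2) - q (k + 2) ∈ I := by
      have := hper2 (k + 2) (by omega)
      rwa [show k + 2 + 2 * β = k + 2 * β + 2 from by ring] at this
    have S1 := qrec_step a₁ a₂ a₃ a₄ (l := l) k β hp0 hp1 hp2
    have S2 := qrec_step a₁ a₂ a₃ a₄ (l := l) k (2 * β) hq0 hq1 hq2
    rw [← hq, ← hI] at S1 S2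
    have hB : ((2 * β ^ 2 : ℕ) : Polynomial R) * (a₄ * q k) ∈ I := by
      have hmem : ((2 * β : ℕ) : Polynomial R) * (a₂ * q (k + 1))
          + ((2 * β : ℕ) : Polynomial R)
            * (2 * (k : Polynomial R) + 13 + ((2 * β : ℕ) : Polynomial R))
            * (a₄ * q k)
          - 2 * ((β : Polynomial R) * (a₂ * q (k + 1))
            + (β : Polynomial R) * (2 * (k : Polynomial R) + 13 + (β : Polynomial R))
              * (a₄ * q k)) ∈ I := sub_mem S2 (Ideal.mul_mem_left _ _ S1)
      have e : ((2 * β ^ 2 : ℕ) : Polynomial R) * (a₄ * q k)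
          = ((2 * β : ℕ) : Polynomial R) * (a₂ * q (k + 1))
          + ((2 * β : ℕ) : Polynomial R)
            * (2 * (k : Polynomial R) + 13 + ((2 * β : ℕ) : Polynomial R))
            * (a₄ * q k)
          - 2 * ((β : Polynomial R) * (a₂ * q (k + 1))
            + (β : Polynomial R) * (2 * (k : Polynomial R) + 13 + (β : Polynomial R))
              * (a₄ * q k)) := by push_cast; ring
      rw [e]; exact hmem
    have hBmem : a₄ * q k ∈ I := cancel_of_coprime hl hdvd2 hB
    have hA : ((β : ℕ) : Polynomial R) * (a₂ * q (k + 1)) ∈ I := by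
      have e : ((β : ℕ) : Polynomial R) * (a₂ * q (k + 1))
          = ((β : Polynomial R) * (a₂ * q (k + 1))
            + (β : Polynomial R) * (2 * (k : Polynomial R) + 13 + (β : Polynomial R))
              * (a₄ * q k))
          - (β : Polynomial R) * (2 * (k : Polynomial R) + 13 + (β : Polynomial R))
              * (a₄ * q k) := by ring
      rw [e]; exact sub_mem S1 (Ideal.mul_mem_left _ _ hBmem)
    exact ⟨hBmem, cancel_of_coprime hl hlβ hA⟩
  intro n hn
  obtain ⟨k, rfl⟩ : ∃ k, n = k + 1 := ⟨n - 1, by omega⟩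
  exact ⟨(main k (by omega)).2, (main (k + 1) (by omega)).1⟩

end
end

section
/- Let K be a number field with ring of integers 𝓞_K, let a₁,a₂,a₃,a₄ ∈ 𝓞_K[t], let q_n ∈ 𝓞_K[t] be given by the recursion, and let l > 2 be a prime. Assume: (i) the ideal of 𝓞_K/l𝓞_K generated by the residues of the constant terms a₂(0) and a₄(0) is the whole ring 𝓞_K/l𝓞_K; (ii) the sequence q_n(0) mod l𝓞_K is not eventually zero; (iii) the sequence of residues q̄_n of q_n in 𝓞_K[t]/(l, t^l) is eventually periodic with least eventual period β (i.e. β ≥ 1 is minimal such that for some α, q̄_{n+β} = q̄_n for all n ≥ α). Then l divides β, and β/l is the least eventual period of the subsequence (q̄_{ml})_{m ≥ 0}. -/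
noncomputable section

open Complex Real MeasureTheory

namespace AuxPeriod
open Polynomial

variable {R : Type*} [CommRing R]

lemma deriv_mem (l : ℕ) {f : Polynomial R}
    (hf : f ∈ Ideal.span ({C (l:R), X ^ l} : Set (Polynomial R))) :
    derivative f ∈ Ideal.span ({C (l:R), X ^ l} : Set (Polynomial R)) := by
  rw [Ideal.mem_span_pair] at hf ⊢
  obtain ⟨a, b, rfl⟩ := hf
  exact ⟨derivative a + b * X ^ (l-1), derivative b, by
    simp [derivative_mul, derivative_X_pow]; ring⟩

lemma dvd_coeff_zero {l : ℕ} (hl : l ≠ 0) {f : Polynomial R}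
    (hf : f ∈ Ideal.span ({C (l:R), X ^ l} : Set (Polynomial R))) :
    (l : R) ∣ f.coeff 0 := by
  rw [Ideal.mem_span_pair] at hf
  obtain ⟨a, b, rfl⟩ := hf
  have h0 : ¬ ((0:ℕ) = l) := fun h => hl h.symm
  simp only [coeff_add, mul_coeff_zero, coeff_C_zero, coeff_X_pow, h0, if_false,
    mul_zero, add_zero]
  exact Dvd.intro _ (mul_comm _ _)

lemma natmul_mem (l : ℕ) {k : ℕ} (hk : l ∣ k) (g : Polynomial R) :
    (k : Polynomial R) * g ∈ Ideal.span ({C (l:R), X ^ l} : Set (Polynomial R)) := by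
  obtain ⟨d, rfl⟩ := hk
  have e : ((l*d : ℕ) : Polynomial R) * g = C (l:R) * ((d:Polynomial R) * g) := by
    rw [C_eq_natCast]; push_cast; ring
  rw [e]
  exact Ideal.mul_mem_right _ _ (Ideal.subset_span (by simp))

lemma cancel {l : ℕ} (hl : l.Prime) {c : ℕ} (hc : ¬ l ∣ c) {g : Polynomial R}
    (h : (c : Polynomial R) * g ∈ Ideal.span ({C (l:R), X ^ l} : Set (Polynomial R))) :
    g ∈ Ideal.span ({C (l:R), X ^ l} : Set (Polynomial R)) := by
  set I := Ideal.span ({C (l:R), X ^ l} : Set (Polynomial R)) with hI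
  have hcop : Nat.Coprime c l := ((hl.coprime_iff_not_dvd).mpr hc).symm
  have htot := Nat.ModEq.pow_totient hcop
  have ht1 : 1 ≤ l.totient := Nat.totient_pos.mpr hl.pos
  have hc1 : 1 ≤ c ^ l.totient := Nat.one_le_pow _ _ (by
    rcases Nat.eq_zero_or_pos c with h0 | h0
    · exact absurd (h0 ▸ dvd_zero l) hc
    · exact h0)
  have hdvd : l ∣ c ^ l.totient - 1 := (Nat.modEq_iff_dvd' hc1).mp htot.symm
  obtain ⟨k, hk⟩ := hdvd
  have hck : c ^ l.totient = l * k + 1 := by omega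
  have h1 : ((c : Polynomial R)) ^ (l.totient - 1) * ((c : Polynomial R) * g) ∈ I :=
    Ideal.mul_mem_left _ _ h
  have h2 : C (l:R) * ((k : Polynomial R) * g) ∈ I :=
    Ideal.mul_mem_right _ _ (Ideal.subset_span (by simp))
  have key : g = (c : Polynomial R) ^ (l.totient - 1) * ((c : Polynomial R) * g)
      - C (l:R) * ((k : Polynomial R) * g) := by
    have h3 : ((c:Polynomial R)) ^ l.totient
        = (l:Polynomial R) * (k:Polynomial R) + 1 := by
      rw [← Nat.cast_pow, hck]; push_cast; ring
    have e : ((c:Polynomial R)) ^ (l.totient - 1) * ((c:Polynomial R) * g)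
        = ((c:Polynomial R)) ^ l.totient * g := by
      rw [← mul_assoc, ← pow_succ, Nat.sub_add_cancel ht1]
    rw [e, h3, Polynomial.C_eq_natCast]
    ring
  rw [key]
  exact Ideal.sub_mem _ h1 h2

lemma qrec_diff (a₁ a₂ a₃ a₄ : Polynomial R) (m b : ℕ) :
    qrec a₁ a₂ a₃ a₄ (m+b+2) - qrec a₁ a₂ a₃ a₄ (m+2) =
      (a₁ + ((m:Polynomial R)+1) * a₂) * (qrec a₁ a₂ a₃ a₄ (m+b+1) - qrec a₁ a₂ a₃ a₄ (m+1))
      + a₃ * Polynomial.derivative (qrec a₁ a₂ a₃ a₄ (m+b+1) - qrec a₁ a₂ a₃ a₄ (m+1))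
      + ((m:Polynomial R)+1) * ((m:Polynomial R)+12) * a₄ *
          (qrec a₁ a₂ a₃ a₄ (m+b) - qrec a₁ a₂ a₃ a₄ m)
      + (b:Polynomial R) * a₂ * qrec a₁ a₂ a₃ a₄ (m+b+1)
      + (b:Polynomial R) * (2*(m:Polynomial R) + (b:Polynomial R) + 13) * a₄ *
          qrec a₁ a₂ a₃ a₄ (m+b) := by
  have e1 : qrec a₁ a₂ a₃ a₄ (m+b+2) =
      (a₁ + (((m+b) : Polynomial R) + 1) * a₂) * qrec a₁ a₂ a₃ a₄ (m+b+1)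
        + a₃ * Polynomial.derivative (qrec a₁ a₂ a₃ a₄ (m+b+1))
        + (((m+b) : Polynomial R) + 1) * (((m+b) : Polynomial R) + 12) * a₄ *
            qrec a₁ a₂ a₃ a₄ (m+b) := by
    rw [qrec]; push_cast; ring
  have e2 : qrec a₁ a₂ a₃ a₄ (m+2) =
      (a₁ + ((m : Polynomial R) + 1) * a₂) * qrec a₁ a₂ a₃ a₄ (m+1)
        + a₃ * Polynomial.derivative (qrec a₁ a₂ a₃ a₄ (m+1))
        + ((m : Polynomial R) + 1) * ((m : Polynomial R) + 12) * a₄ * qrec a₁ a₂ a₃ a₄ m := by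
    rw [qrec]
  rw [e1, e2, derivative_sub]
  ring

lemma rel (a₁ a₂ a₃ a₄ : Polynomial R) (l α b : ℕ)
    (hb : ∀ n, α ≤ n → qrec a₁ a₂ a₃ a₄ (n + b) - qrec a₁ a₂ a₃ a₄ n ∈
      Ideal.span ({C (l:R), X ^ l} : Set (Polynomial R)))
    (m : ℕ) (hm : α ≤ m) :
    (b:Polynomial R) * a₂ * qrec a₁ a₂ a₃ a₄ (m+1)
      + (b:Polynomial R) * (2*(m:Polynomial R) + (b:Polynomial R) + 13) * a₄ *
          qrec a₁ a₂ a₃ a₄ m ∈ Ideal.span ({C (l:R), X ^ l} : Set (Polynomial R)) := by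
  set I := Ideal.span ({C (l:R), X ^ l} : Set (Polynomial R)) with hI
  have h2 : qrec a₁ a₂ a₃ a₄ (m+b+2) - qrec a₁ a₂ a₃ a₄ (m+2) ∈ I := by
    have := hb (m+2) (by omega); rwa [show m+2+b = m+b+2 by omega] at this
  have h1 : qrec a₁ a₂ a₃ a₄ (m+b+1) - qrec a₁ a₂ a₃ a₄ (m+1) ∈ I := by
    have := hb (m+1) (by omega); rwa [show m+1+b = m+b+1 by omega] at this
  have h0 : qrec a₁ a₂ a₃ a₄ (m+b) - qrec a₁ a₂ a₃ a₄ m ∈ I := hb m hm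
  have hE : (b:Polynomial R) * a₂ * qrec a₁ a₂ a₃ a₄ (m+b+1)
      + (b:Polynomial R) * (2*(m:Polynomial R) + (b:Polynomial R) + 13) * a₄ *
        qrec a₁ a₂ a₃ a₄ (m+b) ∈ I := by
    have e : (b:Polynomial R) * a₂ * qrec a₁ a₂ a₃ a₄ (m+b+1)
        + (b:Polynomial R) * (2*(m:Polynomial R) + (b:Polynomial R) + 13) * a₄ *
          qrec a₁ a₂ a₃ a₄ (m+b)
        = (qrec a₁ a₂ a₃ a₄ (m+b+2) - qrec a₁ a₂ a₃ a₄ (m+2))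
          - (a₁ + ((m:Polynomial R)+1) * a₂) *
              (qrec a₁ a₂ a₃ a₄ (m+b+1) - qrec a₁ a₂ a₃ a₄ (m+1))
          - a₃ * Polynomial.derivative
              (qrec a₁ a₂ a₃ a₄ (m+b+1) - qrec a₁ a₂ a₃ a₄ (m+1))
          - ((m:Polynomial R)+1) * ((m:Polynomial R)+12) * a₄ *
              (qrec a₁ a₂ a₃ a₄ (m+b) - qrec a₁ a₂ a₃ a₄ m) := by
      rw [qrec_diff]; ring
    rw [e]
    exact Ideal.sub_mem _ (Ideal.sub_mem _ (Ideal.sub_mem _ h2 (Ideal.mul_mem_left _ _ h1))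
      (Ideal.mul_mem_left _ _ (deriv_mem l h1))) (Ideal.mul_mem_left _ _ h0)
  have e2 : (b:Polynomial R) * a₂ * qrec a₁ a₂ a₃ a₄ (m+1)
      + (b:Polynomial R) * (2*(m:Polynomial R) + (b:Polynomial R) + 13) * a₄ *
          qrec a₁ a₂ a₃ a₄ m
      = ((b:Polynomial R) * a₂ * qrec a₁ a₂ a₃ a₄ (m+b+1)
          + (b:Polynomial R) * (2*(m:Polynomial R) + (b:Polynomial R) + 13) * a₄ *
              qrec a₁ a₂ a₃ a₄ (m+b))
        - ((b:Polynomial R) * a₂) *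
            (qrec a₁ a₂ a₃ a₄ (m+b+1) - qrec a₁ a₂ a₃ a₄ (m+1))
        - ((b:Polynomial R) * (2*(m:Polynomial R) + (b:Polynomial R) + 13) * a₄) *
            (qrec a₁ a₂ a₃ a₄ (m+b) - qrec a₁ a₂ a₃ a₄ m) := by ring
  rw [e2]
  exact Ideal.sub_mem _ (Ideal.sub_mem _ hE (Ideal.mul_mem_left _ _ h1))
    (Ideal.mul_mem_left _ _ h0)

lemma step (a₁ a₂ a₃ a₄ : Polynomial R) (l m b : ℕ) (hb : l ∣ b)
    (h1 : qrec a₁ a₂ a₃ a₄ (m+b+1) - qrec a₁ a₂ a₃ a₄ (m+1) ∈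
      Ideal.span ({C (l:R), X ^ l} : Set (Polynomial R)))
    (h0 : ((m:Polynomial R)+1) * ((m:Polynomial R)+12) * a₄ *
        (qrec a₁ a₂ a₃ a₄ (m+b) - qrec a₁ a₂ a₃ a₄ m) ∈
      Ideal.span ({C (l:R), X ^ l} : Set (Polynomial R))) :
    qrec a₁ a₂ a₃ a₄ (m+b+2) - qrec a₁ a₂ a₃ a₄ (m+2) ∈
      Ideal.span ({C (l:R), X ^ l} : Set (Polynomial R)) := by
  rw [qrec_diff]
  refine Ideal.add_mem _ (Ideal.add_mem _ (Ideal.add_mem _ (Ideal.add_mem _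
    (Ideal.mul_mem_left _ _ h1) (Ideal.mul_mem_left _ _ (deriv_mem l h1))) h0) ?_) ?_
  · rw [mul_assoc]
    exact natmul_mem l hb _
  · rw [show (b:Polynomial R) * (2*(m:Polynomial R)+(b:Polynomial R)+13) * a₄ *
          qrec a₁ a₂ a₃ a₄ (m+b)
        = (b:Polynomial R) * ((2*(m:Polynomial R)+(b:Polynomial R)+13) * a₄ *
          qrec a₁ a₂ a₃ a₄ (m+b)) by ring]
    exact natmul_mem l hb _

lemma tailperiod (a₁ a₂ a₃ a₄ : Polynomial R) (l N b : ℕ)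
    (hNd : l ∣ N) (hN1 : 1 ≤ N) (hb : l ∣ b)
    (h0 : qrec a₁ a₂ a₃ a₄ (N + b) - qrec a₁ a₂ a₃ a₄ N ∈
      Ideal.span ({C (l:R), X ^ l} : Set (Polynomial R))) :
    ∀ j, qrec a₁ a₂ a₃ a₄ (N + j + b) - qrec a₁ a₂ a₃ a₄ (N + j) ∈
      Ideal.span ({C (l:R), X ^ l} : Set (Polynomial R)) := by
  set I := Ideal.span ({C (l:R), X ^ l} : Set (Polynomial R)) with hI
  obtain ⟨c, hc⟩ : ∃ c, N = c + 1 := ⟨N-1, by omega⟩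
  have h1 : qrec a₁ a₂ a₃ a₄ (N + 1 + b) - qrec a₁ a₂ a₃ a₄ (N + 1) ∈ I := by
    have h1' : qrec a₁ a₂ a₃ a₄ (c+b+1) - qrec a₁ a₂ a₃ a₄ (c+1) ∈ I := by
      rw [show c+b+1 = N + b by omega, show c+1 = N by omega]; exact h0
    have h0' : ((c:Polynomial R)+1) * ((c:Polynomial R)+12) * a₄ *
        (qrec a₁ a₂ a₃ a₄ (c+b) - qrec a₁ a₂ a₃ a₄ c) ∈ I := by
      rw [show ((c:Polynomial R)+1) * ((c:Polynomial R)+12) * a₄ *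
            (qrec a₁ a₂ a₃ a₄ (c+b) - qrec a₁ a₂ a₃ a₄ c)
          = ((c+1 : ℕ) : Polynomial R) * (((c:Polynomial R)+12) * a₄ *
            (qrec a₁ a₂ a₃ a₄ (c+b) - qrec a₁ a₂ a₃ a₄ c)) by push_cast; ring]
      exact natmul_mem l (hc ▸ hNd) _
    have := step a₁ a₂ a₃ a₄ l c b hb h1' h0'
    rw [show c+b+2 = N + 1 + b by omega, show c+2 = N+1 by omega] at this
    exact this
  have key : ∀ j, (qrec a₁ a₂ a₃ a₄ (N + j + b) - qrec a₁ a₂ a₃ a₄ (N + j) ∈ I)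
      ∧ (qrec a₁ a₂ a₃ a₄ (N + j + 1 + b) - qrec a₁ a₂ a₃ a₄ (N + j + 1) ∈ I) := by
    intro j
    induction j with
    | zero => exact ⟨by simpa using h0, by simpa using h1⟩
    | succ j ih =>
      constructor
      · rw [show N+(j+1)+b = N+j+1+b by omega, show N+(j+1) = N+j+1 by omega]
        exact ih.2
      have h1' : qrec a₁ a₂ a₃ a₄ (N+j+b+1) - qrec a₁ a₂ a₃ a₄ (N+j+1) ∈ I := by
        rw [show N+j+b+1 = N+j+1+b by omega]; exact ih.2
      have := step a₁ a₂ a₃ a₄ l (N+j) b hb h1' (Ideal.mul_mem_left _ _ ih.1)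
      rw [show N+j+b+2 = N+(j+1)+1+b by omega, show N+j+2 = N+(j+1)+1 by omega] at this
      exact this
  exact fun j => (key j).1

end AuxPeriod

set_option synthInstance.maxHeartbeats 1000000 in
set_option maxHeartbeats 1000000 in
/-- Proposition 6.9 of the paper. -/
theorem l_dvd_least_period (K : Type*) [Field K] [NumberField K]
    (a₁ a₂ a₃ a₄ : Polynomial (NumberField.RingOfIntegers K))
    (l : ℕ) (hl : l.Prime) (hl2 : 2 < l)
    (hgen : Ideal.span
        ({Ideal.Quotient.mk (Ideal.span {(l : NumberField.RingOfIntegers K)}) (a₂.coeff 0),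
          Ideal.Quotient.mk (Ideal.span {(l : NumberField.RingOfIntegers K)}) (a₄.coeff 0)}
          : Set (NumberField.RingOfIntegers K ⧸
              Ideal.span {(l : NumberField.RingOfIntegers K)})) = ⊤)
    (hnz : ∀ N : ℕ, ∃ n : ℕ, N ≤ n ∧
      ¬ (l : NumberField.RingOfIntegers K) ∣ (qrec a₁ a₂ a₃ a₄ n).coeff 0)
    (β : ℕ) (hβ : 1 ≤ β)
    (hper : ∃ α : ℕ, ∀ n : ℕ, α ≤ n →
      qrec a₁ a₂ a₃ a₄ (n + β) - qrec a₁ a₂ a₃ a₄ n ∈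
        Ideal.span ({Polynomial.C (l : NumberField.RingOfIntegers K), Polynomial.X ^ l}
          : Set (Polynomial (NumberField.RingOfIntegers K))))
    (hleast : ∀ β' : ℕ, 1 ≤ β' →
      (∃ α : ℕ, ∀ n : ℕ, α ≤ n →
        qrec a₁ a₂ a₃ a₄ (n + β') - qrec a₁ a₂ a₃ a₄ n ∈
          Ideal.span ({Polynomial.C (l : NumberField.RingOfIntegers K), Polynomial.X ^ l}
            : Set (Polynomial (NumberField.RingOfIntegers K)))) → β ≤ β') :
    l ∣ β ∧
    (∃ α : ℕ, ∀ m : ℕ, α ≤ m →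
      qrec a₁ a₂ a₃ a₄ ((m + β / l) * l) - qrec a₁ a₂ a₃ a₄ (m * l) ∈
        Ideal.span ({Polynomial.C (l : NumberField.RingOfIntegers K), Polynomial.X ^ l}
          : Set (Polynomial (NumberField.RingOfIntegers K)))) ∧
    (∀ β' : ℕ, 1 ≤ β' →
      (∃ α : ℕ, ∀ m : ℕ, α ≤ m →
        qrec a₁ a₂ a₃ a₄ ((m + β') * l) - qrec a₁ a₂ a₃ a₄ (m * l) ∈
          Ideal.span ({Polynomial.C (l : NumberField.RingOfIntegers K), Polynomial.X ^ l}
            : Set (Polynomial (NumberField.RingOfIntegers K)))) → β / l ≤ β') := by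
  classical
  obtain ⟨α, hα⟩ := hper
  have hl0 : l ≠ 0 := hl.pos.ne'
  have hdvd : l ∣ β := by
    by_contra hnd
    have h2per : ∀ n, α ≤ n →
        qrec a₁ a₂ a₃ a₄ (n + 2*β) - qrec a₁ a₂ a₃ a₄ n ∈
          Ideal.span ({Polynomial.C (l : NumberField.RingOfIntegers K), Polynomial.X ^ l}
            : Set (Polynomial (NumberField.RingOfIntegers K))) := by
      intro n hn
      have e : qrec a₁ a₂ a₃ a₄ (n + 2*β) - qrec a₁ a₂ a₃ a₄ n
          = (qrec a₁ a₂ a₃ a₄ (n + β + β) - qrec a₁ a₂ a₃ a₄ (n + β))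
            + (qrec a₁ a₂ a₃ a₄ (n + β) - qrec a₁ a₂ a₃ a₄ n) := by
        rw [show n + 2*β = n + β + β by omega]; ring
      rw [e]
      exact Ideal.add_mem _ (hα (n+β) (by omega)) (hα n hn)
    have relβ := AuxPeriod.rel a₁ a₂ a₃ a₄ l α β hα
    have rel2β := AuxPeriod.rel a₁ a₂ a₃ a₄ l α (2*β) h2per
    have hnd2 : ¬ l ∣ 2*β^2 := by
      intro h
      rcases (Nat.Prime.dvd_mul hl).mp h with h | h
      · have := Nat.le_of_dvd (by norm_num) h; omega
      · exact hnd (hl.dvd_of_dvd_pow h)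
    have ha4 : ∀ m, α ≤ m → a₄ * qrec a₁ a₂ a₃ a₄ m ∈
        Ideal.span ({Polynomial.C (l : NumberField.RingOfIntegers K), Polynomial.X ^ l}
          : Set (Polynomial (NumberField.RingOfIntegers K))) := by
      intro m hm
      refine AuxPeriod.cancel hl hnd2 ?_
      have e : ((2*β^2 : ℕ) : Polynomial (NumberField.RingOfIntegers K)) *
            (a₄ * qrec a₁ a₂ a₃ a₄ m)
          = (((2*β : ℕ)) : Polynomial (NumberField.RingOfIntegers K)) * a₂ *
                qrec a₁ a₂ a₃ a₄ (m+1)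
              + ((2*β : ℕ) : Polynomial (NumberField.RingOfIntegers K)) *
                  (2*(m:Polynomial (NumberField.RingOfIntegers K))
                    + ((2*β:ℕ) : Polynomial (NumberField.RingOfIntegers K)) + 13) * a₄ *
                  qrec a₁ a₂ a₃ a₄ m
            - 2 * ((β:Polynomial (NumberField.RingOfIntegers K)) * a₂ *
                qrec a₁ a₂ a₃ a₄ (m+1)
              + (β:Polynomial (NumberField.RingOfIntegers K)) *
                  (2*(m:Polynomial (NumberField.RingOfIntegers K))
                    + (β:Polynomial (NumberField.RingOfIntegers K)) + 13) * a₄ *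
                  qrec a₁ a₂ a₃ a₄ m) := by
        push_cast; ring
      rw [e]
      exact Ideal.sub_mem _ (rel2β m hm) (Ideal.mul_mem_left _ _ (relβ m hm))
    have ha2 : ∀ m, α ≤ m → a₂ * qrec a₁ a₂ a₃ a₄ (m+1) ∈
        Ideal.span ({Polynomial.C (l : NumberField.RingOfIntegers K), Polynomial.X ^ l}
          : Set (Polynomial (NumberField.RingOfIntegers K))) := by
      intro m hm
      refine AuxPeriod.cancel hl hnd ?_
      have e : ((β : ℕ) : Polynomial (NumberField.RingOfIntegers K)) *
            (a₂ * qrec a₁ a₂ a₃ a₄ (m+1))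
          = ((β:Polynomial (NumberField.RingOfIntegers K)) * a₂ * qrec a₁ a₂ a₃ a₄ (m+1)
              + (β:Polynomial (NumberField.RingOfIntegers K)) *
                  (2*(m:Polynomial (NumberField.RingOfIntegers K))
                    + (β:Polynomial (NumberField.RingOfIntegers K)) + 13) * a₄ *
                  qrec a₁ a₂ a₃ a₄ m)
            - ((β:Polynomial (NumberField.RingOfIntegers K)) *
                  (2*(m:Polynomial (NumberField.RingOfIntegers K))
                    + (β:Polynomial (NumberField.RingOfIntegers K)) + 13)) *
                (a₄ * qrec a₁ a₂ a₃ a₄ m) := by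
        ring
      rw [e]
      exact Ideal.sub_mem _ (relβ m hm) (Ideal.mul_mem_left _ _ (ha4 m hm))
    obtain ⟨n, hn, hq0⟩ := hnz (α+1)
    obtain ⟨m, rfl⟩ : ∃ m, n = m + 1 := ⟨n - 1, by omega⟩
    have d2 : (l : NumberField.RingOfIntegers K) ∣
        a₂.coeff 0 * (qrec a₁ a₂ a₃ a₄ (m+1)).coeff 0 := by
      have := AuxPeriod.dvd_coeff_zero hl0 (ha2 m (by omega))
      rwa [Polynomial.mul_coeff_zero] at this
    have d4 : (l : NumberField.RingOfIntegers K) ∣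
        a₄.coeff 0 * (qrec a₁ a₂ a₃ a₄ (m+1)).coeff 0 := by
      have := AuxPeriod.dvd_coeff_zero hl0 (ha4 (m+1) (by omega))
      rwa [Polynomial.mul_coeff_zero] at this
    have hone : (1 : NumberField.RingOfIntegers K ⧸
        Ideal.span {(l : NumberField.RingOfIntegers K)}) ∈
        Ideal.span ({Ideal.Quotient.mk (Ideal.span {(l : NumberField.RingOfIntegers K)})
            (a₂.coeff 0),
          Ideal.Quotient.mk (Ideal.span {(l : NumberField.RingOfIntegers K)}) (a₄.coeff 0)}
          : Set (NumberField.RingOfIntegers K ⧸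
              Ideal.span {(l : NumberField.RingOfIntegers K)})) := by
      rw [hgen]; trivial
    rw [Ideal.mem_span_pair] at hone
    obtain ⟨u, v, huv⟩ := hone
    have z2 : Ideal.Quotient.mk (Ideal.span {(l : NumberField.RingOfIntegers K)})
        (a₂.coeff 0 * (qrec a₁ a₂ a₃ a₄ (m+1)).coeff 0) = 0 :=
      Ideal.Quotient.eq_zero_iff_mem.mpr (Ideal.mem_span_singleton.mpr d2)
    have z4 : Ideal.Quotient.mk (Ideal.span {(l : NumberField.RingOfIntegers K)})
        (a₄.coeff 0 * (qrec a₁ a₂ a₃ a₄ (m+1)).coeff 0) = 0 :=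
      Ideal.Quotient.eq_zero_iff_mem.mpr (Ideal.mem_span_singleton.mpr d4)
    have z0 : Ideal.Quotient.mk (Ideal.span {(l : NumberField.RingOfIntegers K)})
        ((qrec a₁ a₂ a₃ a₄ (m+1)).coeff 0) = 0 := by
      have h := congrArg (fun x => x * Ideal.Quotient.mk
        (Ideal.span {(l : NumberField.RingOfIntegers K)})
        ((qrec a₁ a₂ a₃ a₄ (m+1)).coeff 0)) huv
      simp only [one_mul] at h
      rw [← h, add_mul, mul_assoc, mul_assoc, ← map_mul, ← map_mul, z2, z4]
      simp
    exact hq0 (Ideal.mem_span_singleton.mp (Ideal.Quotient.eq_zero_iff_mem.mp z0))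
  refine ⟨hdvd, ⟨α, fun m hm => ?_⟩, ?_⟩
  · have e : (m + β / l) * l = m*l + β := by
      calc (m + β/l)*l = m*l + (β/l)*l := by ring
        _ = m*l + β := by rw [Nat.div_mul_cancel hdvd]
    rw [e]
    refine hα (m*l) (hm.trans ?_)
    exact Nat.le_mul_of_pos_right m hl.pos
  · rintro β' hβ' ⟨α', hα'⟩
    have hβl : β ≤ l * β' := by
      apply hleast (l*β') (Nat.one_le_iff_ne_zero.mpr (by positivity))
      have hw0 : qrec a₁ a₂ a₃ a₄ ((max α' 1) * l + l*β')
          - qrec a₁ a₂ a₃ a₄ ((max α' 1)*l) ∈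
          Ideal.span ({Polynomial.C (l : NumberField.RingOfIntegers K), Polynomial.X ^ l}
            : Set (Polynomial (NumberField.RingOfIntegers K))) := by
        have := hα' (max α' 1) (le_max_left _ _)
        rwa [show (max α' 1 + β')*l = (max α' 1)*l + l*β' by ring] at this
      have htail := AuxPeriod.tailperiod a₁ a₂ a₃ a₄ l ((max α' 1)*l) (l*β')
        (dvd_mul_left l _) (Nat.one_le_iff_ne_zero.mpr (by positivity))
        (dvd_mul_right l β') hw0
      refine ⟨(max α' 1)*l, fun n hn => ?_⟩
      obtain ⟨j, rfl⟩ : ∃ j, n = (max α' 1)*l + j := ⟨n - (max α' 1)*l, by omega⟩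
      exact htail j
    calc β / l ≤ (l * β') / l := Nat.div_le_div_right hβl
      _ = β' := Nat.mul_div_cancel_left _ hl.pos

end
end
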